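/- arXiv:1201.0365 — 8 statements merged into one kernel-verified Lean document; each statement's English description precedes it below -/
import Mathlib

section
/- For all permutations π and σ of {1,2,…,n} (each extended to {0,1,…,n} by fixing 0), the image of the composition satisfies: overline(π∘σ) = overline(π) ∘ (π ∘ overline(σ) ∘ π⁻¹), i.e. the image of π∘σ under the map f equals overline(π) composed with the conjugate of overline(σ) by π. -/
/-- The (n+1)-cycle (0,1,2,…,n) on {0,1,…,n} = `Fin (n+1)`, mapping x to x+1 (mod n+1). -/
def rho (n : ℕ) : Equiv.Perm (Fin (n + 1)) :=
  finRotate (n + 1)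

/-- For a permutation `π` of {0,1,…,n} fixing 0 (the extension of a permutation of {1,…,n}),
`ob n π` is `overline(π) = ρ ∘ β_π`, where `β_π = π ∘ ρ⁻¹ ∘ π⁻¹` is precisely the
(n+1)-cycle (0, π_n, π_{n−1}, …, π_1): it sends 0 ↦ π_n, π_i ↦ π_{i−1} (2 ≤ i ≤ n),
and π_1 ↦ 0. -/
def ob (n : ℕ) (π : Equiv.Perm (Fin (n + 1))) : Equiv.Perm (Fin (n + 1)) :=
  rho n * (π * (rho n)⁻¹ * π⁻¹)

/-- for permutations π and σ of {1,…,n} (extended to {0,…,n} by fixing 0),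
`overline(π∘σ) = overline(π) ∘ (π ∘ overline(σ) ∘ π⁻¹)`. -/
theorem overline_mul (n : ℕ) (π σ : Equiv.Perm (Fin (n + 1)))
    (hπ : π 0 = 0) (hσ : σ 0 = 0) :
    ob n (π * σ) = ob n π * (π * ob n σ * π⁻¹) := by
  simp only [ob, mul_assoc, inv_mul_cancel_left, mul_inv_rev]
end

section
/- Let S be a set of permutations of {1,2,…,n} and let π be a permutation of {1,2,…,n} that factors as π = g_t ∘ g_{t−1} ∘ ⋯ ∘ g_1 with every g_i ∈ S. Then there exist permutations h_1, h_2, …, h_t of {0,1,…,n}, each of which is conjugate (in the symmetric group on {0,1,…,n}) to overline(g) for some g ∈ S, such that overline(π) = h_t ∘ h_{t−1} ∘ ⋯ ∘ h_1. -/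
lemma prod_fixes_zero (n : ℕ) (L : List (Equiv.Perm (Fin (n + 1))))
    (h : ∀ g ∈ L, g 0 = 0) : L.prod 0 = 0 := by
  induction L with
  | nil => simp
  | cons g L ih =>
    simp only [List.prod_cons, Equiv.Perm.mul_apply]
    rw [ih (fun g hg => h g (List.mem_cons_of_mem _ hg)), h g List.mem_cons_self]

lemma conj_map_prod {G : Type*} [Group G] (g : G) (M : List G) :
    (M.map fun h => g * h * g⁻¹).prod = g * M.prod * g⁻¹ := by
  induction M with
  | nil => simp
  | cons a M ihm =>
    simp only [List.map_cons, List.prod_cons, ihm]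
    group

lemma ob_mul (n : ℕ) (g τ : Equiv.Perm (Fin (n + 1))) :
    ob n (g * τ) = ob n g * (g * ob n τ * g⁻¹) := by
  simp only [ob]
  group

/-- if π (a permutation of {1,…,n}, extended by fixing 0) factors as a
product of t elements of S (each a permutation of {1,…,n} extended by fixing 0),
then overline(π) factors as a product of t permutations of {0,1,…,n}, each conjugate
(in the symmetric group on {0,1,…,n}) to overline(g) for some g ∈ S. -/
theorem overline_factorisation (n : ℕ) (S : Set (Equiv.Perm (Fin (n + 1))))
    (hS : ∀ g ∈ S, g 0 = 0)
    (π : Equiv.Perm (Fin (n + 1))) (hπ : π 0 = 0)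
    (L : List (Equiv.Perm (Fin (n + 1)))) (hL : ∀ g ∈ L, g ∈ S) (hLπ : L.prod = π) :
    ∃ M : List (Equiv.Perm (Fin (n + 1))),
      M.length = L.length ∧
      (∀ h ∈ M, ∃ g ∈ S, IsConj (ob n g) h) ∧
      M.prod = ob n π := by
  subst hLπ
  clear hπ
  induction L with
  | nil =>
    refine ⟨[], rfl, by simp, ?_⟩
    simp [ob]
  | cons g L ih =>
    obtain ⟨M, hlen, hconj, hprod⟩ :=
      ih (fun g hg => hL g (List.mem_cons_of_mem _ hg))
    refine ⟨ob n g :: M.map (fun h => g * h * g⁻¹), by simp [hlen], ?_, ?_⟩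
    · intro h hh
      rcases List.mem_cons.mp hh with rfl | hh
      · exact ⟨g, hL g List.mem_cons_self, IsConj.refl _⟩
      · obtain ⟨h', hh', rfl⟩ := List.mem_map.mp hh
        obtain ⟨g', hg', hc⟩ := hconj h' hh'
        exact ⟨g', hg', hc.trans (isConj_iff.mpr ⟨g, rfl⟩)⟩
    · simp only [List.prod_cons, conj_map_prod, hprod, ob_mul]
end

section
/- For any block-interchange β(i,j,k,l) of {1,2,…,n} with 1 ≤ i < j ≤ k < l ≤ n+1, its image under the map f is the product of two transpositions: overline(β(i,j,k,l)) = (j,l) ∘ (i,k), where (j,l) and (i,k) denote the permutations of {0,1,…,n} exchanging j with l and i with k respectively (note these two transpositions need not be disjoint, since j = k is allowed). -/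
/-- `IsBlockInterchange n i j k l β` says that `β` (a permutation of {0,1,…,n} fixing 0,
representing a permutation of {1,…,n}) is the block-interchange β(i,j,k,l) with
1 ≤ i < j ≤ k < l ≤ n+1, i.e. its one-line notation on positions 1,…,n is
⟨1,…,i−1, k,…,l−1, j,…,k−1, i,…,j−1, l,…,n⟩. -/
def IsBlockInterchange (n i j k l : ℕ) (β : Equiv.Perm (Fin (n + 1))) : Prop :=
  1 ≤ i ∧ i < j ∧ j ≤ k ∧ k < l ∧ l ≤ n + 1 ∧
  (∀ p : Fin (n + 1), (p : ℕ) < i → β p = p) ∧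
  (∀ p : Fin (n + 1), i ≤ (p : ℕ) → (p : ℕ) < i + (l - k) →
      (β p : ℕ) = k + ((p : ℕ) - i)) ∧
  (∀ p : Fin (n + 1), i + (l - k) ≤ (p : ℕ) → (p : ℕ) < i + (l - k) + (k - j) →
      (β p : ℕ) = j + ((p : ℕ) - (i + (l - k)))) ∧
  (∀ p : Fin (n + 1), i + (l - k) + (k - j) ≤ (p : ℕ) → (p : ℕ) < l →
      (β p : ℕ) = i + ((p : ℕ) - (i + (l - k) + (k - j)))) ∧
  (∀ p : Fin (n + 1), l ≤ (p : ℕ) → β p = p)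

open Fin.NatCast

private lemma swap_mk {N : ℕ} (a b v : ℕ) (ha : a < N) (hb : b < N) (hv : v < N) :
    Equiv.swap (⟨a, ha⟩ : Fin N) ⟨b, hb⟩ ⟨v, hv⟩ =
      ⟨if v = a then b else if v = b then a else v, by split_ifs <;> assumption⟩ := by
  simp only [Equiv.swap_apply_def, Fin.mk.injEq]
  split_ifs <;> rfl

set_option maxHeartbeats 4000000 in
/-- the image of the block-interchange β(i,j,k,l) under the map f is the
product of the two transpositions (j,l) and (i,k) of {0,1,…,n}
(the numbers i,j,k,l being taken mod n+1, which only affects l = n+1, identified with 0). -/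
theorem overline_blockInterchange (n i j k l : ℕ) (β : Equiv.Perm (Fin (n + 1)))
    (h : IsBlockInterchange n i j k l β) :
    ob n β = Equiv.swap (j : Fin (n + 1)) (l : Fin (n + 1)) *
      Equiv.swap (i : Fin (n + 1)) (k : Fin (n + 1)) := by
  obtain ⟨hi, hij, hjk, hkl, hln, hA, hB, hC, hD, hE⟩ := h
  have key : rho n * β * (rho n)⁻¹ =
      (Equiv.swap (j : Fin (n + 1)) (l : Fin (n + 1)) *
        Equiv.swap (i : Fin (n + 1)) (k : Fin (n + 1))) * β := by
    have hlast : Fin.last n = ⟨n, by omega⟩ := rfl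
    have hiv : (i : Fin (n + 1)) = ⟨i, by omega⟩ := Fin.ext (Fin.val_cast_of_lt (by omega))
    have hjv : (j : Fin (n + 1)) = ⟨j, by omega⟩ := Fin.ext (Fin.val_cast_of_lt (by omega))
    have hkv : (k : Fin (n + 1)) = ⟨k, by omega⟩ := Fin.ext (Fin.val_cast_of_lt (by omega))
    obtain ⟨lv, hlvlt, hlv2, hlv⟩ : ∃ lv, ∃ hh : lv < n + 1,
        (lv = l ∨ (lv = 0 ∧ l = n + 1)) ∧ (l : Fin (n + 1)) = ⟨lv, hh⟩ := by
      refine ⟨l % (n + 1), Nat.mod_lt _ (by omega), ?_, Fin.ext (Fin.val_natCast l (n + 1))⟩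
      rcases Nat.lt_or_ge l (n + 1) with hc | hc
      · exact Or.inl (Nat.mod_eq_of_lt hc)
      · have hc' : l = n + 1 := by omega
        subst hc'
        exact Or.inr ⟨Nat.mod_self _, rfl⟩
    ext x
    simp only [Equiv.Perm.mul_apply]
    have hinv : (rho n)⁻¹ x = x - 1 := by
      have h1 : rho n (x - 1) = x := by
        simp only [rho, finRotate_succ_apply]
        exact sub_add_cancel x 1
      exact Equiv.Perm.inv_eq_iff_eq.mpr h1.symm
    rw [hinv]
    simp only [rho, finRotate_succ_apply]
    obtain ⟨xv, hxlt⟩ := x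
    rcases Nat.eq_zero_or_pos xv with hx0 | hx0
    · -- xv = 0
      have hsub0 : (⟨xv, hxlt⟩ : Fin (n + 1)) - 1 = ⟨n, by omega⟩ := by
        rw [sub_eq_iff_eq_add]
        apply Fin.ext
        rw [Fin.val_add_one]
        simp only [hlast, Fin.mk.injEq, Fin.val_mk]
        split_ifs <;> omega
      have h2 : β ⟨xv, hxlt⟩ = ⟨xv, hxlt⟩ := hA _ (show xv < i by omega)
      rcases Nat.lt_or_ge l (n + 1) with hl | hl
      · have h1 : β (⟨n, by omega⟩ : Fin (n + 1)) = ⟨n, by omega⟩ :=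
          hE _ (show l ≤ n by omega)
        simp only [hsub0, h1, h2, hiv, hjv, hkv, hlv, swap_mk]
        simp only [Fin.ext_iff, Fin.val_add_one, hlast, Fin.mk.injEq, Fin.val_mk]
        split_ifs <;> omega
      · have hl' : l = n + 1 := by omega
        have h1 : β (⟨n, by omega⟩ : Fin (n + 1)) =
            ⟨i + (n - (i + (l - k) + (k - j))), by omega⟩ :=
          Fin.ext (hD _ (show i + (l - k) + (k - j) ≤ n by omega) (show n < l by omega))
        simp only [hsub0, h1, h2, hiv, hjv, hkv, hlv, swap_mk]
        simp only [Fin.ext_iff, Fin.val_add_one, hlast, Fin.mk.injEq, Fin.val_mk]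
        split_ifs <;> omega
    · -- xv ≥ 1
      have hsub : (⟨xv, hxlt⟩ : Fin (n + 1)) - 1 = ⟨xv - 1, by omega⟩ := by
        rw [sub_eq_iff_eq_add]
        apply Fin.ext
        rw [Fin.val_add_one]
        simp only [hlast, Fin.mk.injEq, Fin.val_mk]
        split_ifs <;> omega
      rcases (show xv < i ∨ xv = i ∨ (i < xv ∧ xv < i + (l - k)) ∨
          (xv = i + (l - k) ∧ j < k) ∨
          (i + (l - k) < xv ∧ xv < i + (l - k) + (k - j)) ∨
          (xv = i + (l - k) + (k - j) ∧ j < k) ∨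
          (xv = i + (l - k) + (k - j) ∧ j = k) ∨
          (i + (l - k) + (k - j) < xv ∧ xv < l) ∨ xv = l ∨ l < xv by omega) with
        hc | hc | ⟨hc1, hc2⟩ | ⟨hc1, hc2⟩ | ⟨hc1, hc2⟩ | ⟨hc1, hc2⟩ | ⟨hc1, hc2⟩ |
        ⟨hc1, hc2⟩ | hc | hc
      · -- 1 ≤ xv < i
        have h1 : β (⟨xv - 1, by omega⟩ : Fin (n + 1)) = ⟨xv - 1, by omega⟩ :=
          hA _ (show xv - 1 < i by omega)
        have h2 : β ⟨xv, hxlt⟩ = ⟨xv, hxlt⟩ := hA _ (show xv < i by omega)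
        simp only [hsub, h1, h2, hiv, hjv, hkv, hlv, swap_mk]
        simp only [Fin.ext_iff, Fin.val_add_one, hlast, Fin.mk.injEq, Fin.val_mk]
        split_ifs <;> omega
      · -- xv = i
        have h1 : β (⟨xv - 1, by omega⟩ : Fin (n + 1)) = ⟨xv - 1, by omega⟩ :=
          hA _ (show xv - 1 < i by omega)
        have h2 : β ⟨xv, hxlt⟩ = ⟨k + (xv - i), by omega⟩ :=
          Fin.ext (hB _ (show i ≤ xv by omega) (show xv < i + (l - k) by omega))
        simp only [hsub, h1, h2, hiv, hjv, hkv, hlv, swap_mk]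
        simp only [Fin.ext_iff, Fin.val_add_one, hlast, Fin.mk.injEq, Fin.val_mk]
        split_ifs <;> omega
      · -- i < xv < i + (l-k)
        have h1 : β (⟨xv - 1, by omega⟩ : Fin (n + 1)) = ⟨k + (xv - 1 - i), by omega⟩ :=
          Fin.ext (hB _ (show i ≤ xv - 1 by omega) (show xv - 1 < i + (l - k) by omega))
        have h2 : β ⟨xv, hxlt⟩ = ⟨k + (xv - i), by omega⟩ :=
          Fin.ext (hB _ (show i ≤ xv by omega) (show xv < i + (l - k) by omega))
        simp only [hsub, h1, h2, hiv, hjv, hkv, hlv, swap_mk]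
        simp only [Fin.ext_iff, Fin.val_add_one, hlast, Fin.mk.injEq, Fin.val_mk]
        split_ifs <;> omega
      · -- xv = i + (l-k), j < k
        have h1 : β (⟨xv - 1, by omega⟩ : Fin (n + 1)) = ⟨k + (xv - 1 - i), by omega⟩ :=
          Fin.ext (hB _ (show i ≤ xv - 1 by omega) (show xv - 1 < i + (l - k) by omega))
        have h2 : β ⟨xv, hxlt⟩ = ⟨j + (xv - (i + (l - k))), by omega⟩ :=
          Fin.ext (hC _ (show i + (l - k) ≤ xv by omega)
            (show xv < i + (l - k) + (k - j) by omega))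
        simp only [hsub, h1, h2, hiv, hjv, hkv, hlv, swap_mk]
        simp only [Fin.ext_iff, Fin.val_add_one, hlast, Fin.mk.injEq, Fin.val_mk]
        split_ifs <;> omega
      · -- i + (l-k) < xv < i + (l-k) + (k-j)
        have h1 : β (⟨xv - 1, by omega⟩ : Fin (n + 1)) =
            ⟨j + (xv - 1 - (i + (l - k))), by omega⟩ :=
          Fin.ext (hC _ (show i + (l - k) ≤ xv - 1 by omega)
            (show xv - 1 < i + (l - k) + (k - j) by omega))
        have h2 : β ⟨xv, hxlt⟩ = ⟨j + (xv - (i + (l - k))), by omega⟩ :=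
          Fin.ext (hC _ (show i + (l - k) ≤ xv by omega)
            (show xv < i + (l - k) + (k - j) by omega))
        simp only [hsub, h1, h2, hiv, hjv, hkv, hlv, swap_mk]
        simp only [Fin.ext_iff, Fin.val_add_one, hlast, Fin.mk.injEq, Fin.val_mk]
        split_ifs <;> omega
      · -- xv = i + (l-k) + (k-j), j < k
        have h1 : β (⟨xv - 1, by omega⟩ : Fin (n + 1)) =
            ⟨j + (xv - 1 - (i + (l - k))), by omega⟩ :=
          Fin.ext (hC _ (show i + (l - k) ≤ xv - 1 by omega)
            (show xv - 1 < i + (l - k) + (k - j) by omega))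
        have h2 : β ⟨xv, hxlt⟩ = ⟨i + (xv - (i + (l - k) + (k - j))), by omega⟩ :=
          Fin.ext (hD _ (show i + (l - k) + (k - j) ≤ xv by omega) (show xv < l by omega))
        simp only [hsub, h1, h2, hiv, hjv, hkv, hlv, swap_mk]
        simp only [Fin.ext_iff, Fin.val_add_one, hlast, Fin.mk.injEq, Fin.val_mk]
        split_ifs <;> omega
      · -- xv = i + (l-k) + (k-j), j = k
        have h1 : β (⟨xv - 1, by omega⟩ : Fin (n + 1)) = ⟨k + (xv - 1 - i), by omega⟩ :=
          Fin.ext (hB _ (show i ≤ xv - 1 by omega) (show xv - 1 < i + (l - k) by omega))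
        have h2 : β ⟨xv, hxlt⟩ = ⟨i + (xv - (i + (l - k) + (k - j))), by omega⟩ :=
          Fin.ext (hD _ (show i + (l - k) + (k - j) ≤ xv by omega) (show xv < l by omega))
        simp only [hsub, h1, h2, hiv, hjv, hkv, hlv, swap_mk]
        simp only [Fin.ext_iff, Fin.val_add_one, hlast, Fin.mk.injEq, Fin.val_mk]
        split_ifs <;> omega
      · -- i + (l-k) + (k-j) < xv < l
        have h1 : β (⟨xv - 1, by omega⟩ : Fin (n + 1)) =
            ⟨i + (xv - 1 - (i + (l - k) + (k - j))), by omega⟩ :=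
          Fin.ext (hD _ (show i + (l - k) + (k - j) ≤ xv - 1 by omega)
            (show xv - 1 < l by omega))
        have h2 : β ⟨xv, hxlt⟩ = ⟨i + (xv - (i + (l - k) + (k - j))), by omega⟩ :=
          Fin.ext (hD _ (show i + (l - k) + (k - j) ≤ xv by omega) (show xv < l by omega))
        simp only [hsub, h1, h2, hiv, hjv, hkv, hlv, swap_mk]
        simp only [Fin.ext_iff, Fin.val_add_one, hlast, Fin.mk.injEq, Fin.val_mk]
        split_ifs <;> omega
      · -- xv = l
        have h1 : β (⟨xv - 1, by omega⟩ : Fin (n + 1)) =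
            ⟨i + (xv - 1 - (i + (l - k) + (k - j))), by omega⟩ :=
          Fin.ext (hD _ (show i + (l - k) + (k - j) ≤ xv - 1 by omega)
            (show xv - 1 < l by omega))
        have h2 : β ⟨xv, hxlt⟩ = ⟨xv, hxlt⟩ := hE _ (show l ≤ xv by omega)
        simp only [hsub, h1, h2, hiv, hjv, hkv, hlv, swap_mk]
        simp only [Fin.ext_iff, Fin.val_add_one, hlast, Fin.mk.injEq, Fin.val_mk]
        split_ifs <;> omega
      · -- l < xv
        have h1 : β (⟨xv - 1, by omega⟩ : Fin (n + 1)) = ⟨xv - 1, by omega⟩ :=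
          hE _ (show l ≤ xv - 1 by omega)
        have h2 : β ⟨xv, hxlt⟩ = ⟨xv, hxlt⟩ := hE _ (show l ≤ xv by omega)
        simp only [hsub, h1, h2, hiv, hjv, hkv, hlv, swap_mk]
        simp only [Fin.ext_iff, Fin.val_add_one, hlast, Fin.mk.injEq, Fin.val_mk]
        split_ifs <;> omega
  have hob : ob n β = (rho n * β * (rho n)⁻¹) * β⁻¹ := by
    unfold ob; group
  rw [hob, key, mul_inv_cancel_right]
end

section
/- For any transposition τ(i,j,l) of {1,2,…,n} with 1 ≤ i < j < l ≤ n+1, its image under the map f is the 3-cycle overline(τ(i,j,l)) = (i,l,j), i.e. the permutation of {0,1,…,n} mapping i ↦ l, l ↦ j, j ↦ i and fixing all other elements. -/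
/-- `IsGRTransposition n i j l τ` says that `τ` (a permutation of {0,1,…,n} fixing 0,
representing a permutation of {1,…,n}) is the (genome-rearrangement) transposition
τ(i,j,l) with 1 ≤ i < j < l ≤ n+1, i.e. its one-line notation on positions 1,…,n is
⟨1,…,i−1, j,…,l−1, i,…,j−1, l,…,n⟩. -/
def IsGRTransposition (n i j l : ℕ) (τ : Equiv.Perm (Fin (n + 1))) : Prop :=
  1 ≤ i ∧ i < j ∧ j < l ∧ l ≤ n + 1 ∧
  (∀ p : Fin (n + 1), (p : ℕ) < i → τ p = p) ∧
  (∀ p : Fin (n + 1), i ≤ (p : ℕ) → (p : ℕ) < i + (l - j) →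
      (τ p : ℕ) = j + ((p : ℕ) - i)) ∧
  (∀ p : Fin (n + 1), i + (l - j) ≤ (p : ℕ) → (p : ℕ) < l →
      (τ p : ℕ) = i + ((p : ℕ) - (i + (l - j)))) ∧
  (∀ p : Fin (n + 1), l ≤ (p : ℕ) → τ p = p)

open Fin.NatCast in
/-- the image of the transposition τ(i,j,l) under the map f is the
3-cycle (i,l,j) of {0,1,…,n}, mapping i ↦ l, l ↦ j, j ↦ i and fixing everything else
(the numbers being taken mod n+1, which only affects l = n+1, identified with 0). -/
theorem overline_transposition (n i j l : ℕ) (τ : Equiv.Perm (Fin (n + 1)))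
    (h : IsGRTransposition n i j l τ) :
    ∀ x : Fin (n + 1), ob n τ x =
      if x = (i : Fin (n + 1)) then (l : Fin (n + 1))
      else if x = (l : Fin (n + 1)) then (j : Fin (n + 1))
      else if x = (j : Fin (n + 1)) then (i : Fin (n + 1))
      else x := by
  obtain ⟨hi, hij, hjl, hln, h1, h2, h3, h4⟩ := h
  have hn : 2 ≤ n := by omega
  have hiv : ((i : Fin (n+1)) : ℕ) = i := Fin.val_cast_of_lt (by omega)
  have hjv : ((j : Fin (n+1)) : ℕ) = j := Fin.val_cast_of_lt (by omega)
  have hlv : ((l : Fin (n+1)) : ℕ) = l % (n+1) := Fin.val_natCast l (n+1)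
  have hL : (l % (n+1) = l ∧ l < n+1) ∨ (l % (n+1) = 0 ∧ l = n+1) := by
    rcases Nat.lt_or_ge l (n+1) with hl | hl
    · exact Or.inl ⟨Nat.mod_eq_of_lt hl, hl⟩
    · have : l = n+1 := by omega
      subst this; exact Or.inr ⟨Nat.mod_self _, rfl⟩
  have hadd : ∀ a : Fin (n+1), ((a + 1 : Fin (n+1)) : ℕ) = ((a : ℕ) + 1) % (n+1) := by
    intro a
    rw [Fin.add_def, Fin.val_one', Nat.mod_eq_of_lt (show 1 < n+1 by omega)]
  intro x
  obtain ⟨y, rfl⟩ := τ.surjective x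
  have key : (ob n τ) (τ y) = τ (y - 1) + 1 := by
    have hinv : (finRotate (n+1))⁻¹ y = y - 1 := by
      rw [Equiv.Perm.inv_def, Equiv.symm_apply_eq, finRotate_succ_apply, sub_add_cancel]
    simp only [ob, Equiv.Perm.mul_apply, (show ∀ x, τ⁻¹ (τ x) = x from τ.symm_apply_apply), hinv, rho,
      finRotate_succ_apply]
  rw [key]
  have hne_i : ∀ a : Fin (n+1), (a:ℕ) ≠ i → a ≠ (i : Fin (n+1)) :=
    fun a ha hh => ha (by rw [hh, hiv])
  have hne_j : ∀ a : Fin (n+1), (a:ℕ) ≠ j → a ≠ (j : Fin (n+1)) :=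
    fun a ha hh => ha (by rw [hh, hjv])
  have hne_l : ∀ a : Fin (n+1), (a:ℕ) ≠ l % (n+1) → a ≠ (l : Fin (n+1)) :=
    fun a ha hh => ha (by rw [hh, hlv])
  have heq_i : ∀ a : Fin (n+1), (a:ℕ) = i → a = (i : Fin (n+1)) :=
    fun a ha => Fin.ext (by rw [ha, hiv])
  have heq_j : ∀ a : Fin (n+1), (a:ℕ) = j → a = (j : Fin (n+1)) :=
    fun a ha => Fin.ext (by rw [ha, hjv])
  have heq_l : ∀ a : Fin (n+1), (a:ℕ) = l % (n+1) → a = (l : Fin (n+1)) :=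
    fun a ha => Fin.ext (by rw [ha, hlv])
  set q : ℕ := (y : ℕ) with hq
  have hqlt : q < n + 1 := y.isLt
  have hp : ((y - 1 : Fin (n+1)) : ℕ) = if y = 0 then n else q - 1 := Fin.coe_sub_one y
  by_cases hq0 : y = 0
  · -- q = 0
    subst hq0
    have hty : τ 0 = 0 := h1 0 (by simp; omega)
    rw [if_pos rfl] at hp
    rcases hL with ⟨hl1, hl2⟩ | ⟨hl1, hl2⟩
    · -- l ≤ n : τ (0-1) = 0-1, result 0
      have htp : τ (0 - 1) = 0 - 1 := h4 _ (by omega)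
      rw [hty, htp]
      rw [if_neg (hne_i 0 (by simp; omega)), if_neg (hne_l 0 (by simp; omega)),
        if_neg (hne_j 0 (by simp; omega))]
      refine Fin.ext ?_
      rw [hadd, hp]
      simp [Nat.mod_self]
    · -- l = n+1 : τ(0-1) = j-1, result j; RHS: 0 = l mod, so j
      have htp : (τ (0 - 1) : ℕ) = i + (n - (i + (l - j))) := by
        have := h3 (0 - 1) (by omega) (by omega); omega
      rw [hty]
      rw [if_neg (hne_i 0 (by simp; omega)), if_pos (heq_l 0 (by simp; omega))]
      refine Fin.ext ?_
      rw [hadd, htp, hjv, Nat.mod_eq_of_lt (by omega)]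
      omega
  · -- q ≥ 1
    rw [if_neg hq0] at hp
    have hq1 : 1 ≤ q := by
      rcases Nat.eq_zero_or_pos q with h0 | h0
      · exact absurd (Fin.ext (by simp [← hq, h0])) hq0
      · exact h0
    by_cases hc1 : q < i
    · -- identity region
      have hty : τ y = y := h1 y (by omega)
      have htp : τ (y - 1) = y - 1 := h1 _ (by omega)
      rw [hty, htp]
      rw [if_neg (hne_i y (by omega)), if_neg (hne_l y (by omega)),
        if_neg (hne_j y (by omega))]
      refine Fin.ext ?_
      rw [hadd, hp, Nat.mod_eq_of_lt (by omega)]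
      omega
    · by_cases hc2 : q = i
      · -- q = i : τ y = j, τ (y-1) = y-1 (val i-1), result i; RHS j ↦ i
        have hty : (τ y : ℕ) = j + (q - i) := h2 y (by omega) (by omega)
        have htp : τ (y - 1) = y - 1 := h1 _ (by omega)
        rw [htp]
        rw [if_neg (hne_i (τ y) (by omega)), if_neg (hne_l (τ y) (by omega)),
          if_pos (heq_j (τ y) (by omega))]
        refine Fin.ext ?_
        rw [hadd, hp, hiv, Nat.mod_eq_of_lt (by omega)]
        omega
      · by_cases hc3 : q < i + (l - j)
        · -- strict inside second segment
          have hty : (τ y : ℕ) = j + (q - i) := h2 y (by omega) (by omega)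
          have htp : (τ (y - 1) : ℕ) = j + ((q - 1) - i) := by
            have := h2 (y - 1) (by omega) (by omega)
            rwa [hp] at this
          rw [if_neg (hne_i (τ y) (by omega)), if_neg (hne_l (τ y) (by omega)),
            if_neg (hne_j (τ y) (by omega))]
          refine Fin.ext ?_
          rw [hadd, htp, hty, Nat.mod_eq_of_lt (by omega)]
          omega
        · by_cases hc4 : q = i + (l - j)
          · -- q = i+(l-j): τ y = i, τ(y-1) = l-1, result l; RHS i ↦ l
            have hty : (τ y : ℕ) = i + (q - (i + (l - j))) := h3 y (by omega) (by omega)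
            have htp : (τ (y - 1) : ℕ) = j + ((q - 1) - i) := by
              have := h2 (y - 1) (by omega) (by omega)
              rwa [hp] at this
            rw [if_pos (heq_i (τ y) (by omega))]
            refine Fin.ext ?_
            rw [hadd, htp, hlv]
            congr 1
            omega
          · by_cases hc5 : q < l
            · -- strict inside third segment
              have hty : (τ y : ℕ) = i + (q - (i + (l - j))) := h3 y (by omega) (by omega)
              have htp : (τ (y - 1) : ℕ) = i + ((q - 1) - (i + (l - j))) := by
                have := h3 (y - 1) (by omega) (by omega)
                rwa [hp] at this
              rw [if_neg (hne_i (τ y) (by omega)), if_neg (hne_l (τ y) (by omega)),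
                if_neg (hne_j (τ y) (by omega))]
              refine Fin.ext ?_
              rw [hadd, htp, hty, Nat.mod_eq_of_lt (by omega)]
              omega
            · by_cases hc6 : q = l
              · -- q = l (so l ≤ n): τ y = y, τ(y-1) = j-1, result j; RHS l ↦ j
                have hty : τ y = y := h4 y (by omega)
                have htp : (τ (y - 1) : ℕ) = i + ((q - 1) - (i + (l - j))) := by
                  have := h3 (y - 1) (by omega) (by omega)
                  rwa [hp] at this
                rw [hty]
                rw [if_neg (hne_i y (by omega)), if_pos (heq_l y (by omega))]
                refine Fin.ext ?_
                rw [hadd, htp, hjv, Nat.mod_eq_of_lt (by omega)]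
                omega
              · -- q > l: identity region
                have hty : τ y = y := h4 y (by omega)
                have htp : τ (y - 1) = y - 1 := h4 _ (by omega)
                rw [hty, htp]
                rw [if_neg (hne_i y (by omega)), if_neg (hne_l y (by omega)),
                  if_neg (hne_j y (by omega))]
                refine Fin.ext ?_
                rw [hadd, hp, Nat.mod_eq_of_lt (by omega)]
                omega
end

section
/- For every permutation π of {1,2,…,n}, the number of prefix transposition breakpoints satisfies ptb(π) = n + 1 − c₁(overline(π)) + ε, where c₁(overline(π)) is the number of fixed points of the permutation overline(π) of {0,1,…,n}, and ε = 1 if π_1 = 1 and ε = 0 otherwise. -/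
/-- The number of fixed points c₁(σ) of a permutation σ. -/
def fixedPointCount {m : ℕ} (σ : Equiv.Perm (Fin m)) : ℕ :=
  (Finset.univ.filter fun x => σ x = x).card

/-- The number of cycles c(σ) of a permutation σ, counting fixed points as 1-cycles
(`Equiv.Perm.cycleType` lists the lengths of the cycles of length ≥ 2). -/
def cycleCount {m : ℕ} (σ : Equiv.Perm (Fin m)) : ℕ :=
  σ.cycleType.card + fixedPointCount σ

/-- The number of odd-length cycles c_odd(σ) of a permutation σ, counting fixed points
as (odd) 1-cycles. -/
def oddCycleCount {m : ℕ} (σ : Equiv.Perm (Fin m)) : ℕ :=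
  (σ.cycleType.filter fun k => Odd k).card + fixedPointCount σ

/-- The extended sequence π̃ = ⟨0 π_1 π_2 ⋯ π_n (n+1)⟩ of a permutation π of {1,…,n}
(given as a permutation of {0,1,…,n} fixing 0), as a function on indices 0,…,n+1. -/
def ptilde (n : ℕ) (π : Equiv.Perm (Fin (n + 1))) (m : ℕ) : ℕ :=
  if h : m < n + 1 then (π ⟨m, h⟩ : ℕ) else n + 1

/-- The number ptb(π) of prefix transposition breakpoints of π: the number of indices
0 ≤ i ≤ n such that the pair (π̃_i, π̃_{i+1}) is a breakpoint, i.e. i = 0 or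
π̃_{i+1} ≠ π̃_i + 1. -/
def ptb (n : ℕ) (π : Equiv.Perm (Fin (n + 1))) : ℕ :=
  ((Finset.range (n + 1)).filter fun m =>
    m = 0 ∨ ptilde n π (m + 1) ≠ ptilde n π m + 1).card

lemma perm_inv_apply_self {α : Type*} (e : Equiv.Perm α) (x : α) : e⁻¹ (e x) = x := by
  simp only [Equiv.Perm.coe_inv, Equiv.symm_apply_apply]

lemma perm_apply_inv_self {α : Type*} (e : Equiv.Perm α) (x : α) : e (e⁻¹ x) = x := by
  simp only [Equiv.Perm.coe_inv, Equiv.apply_symm_apply]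

lemma fix_eq (n : ℕ) (π : Equiv.Perm (Fin (n + 1))) :
    fixedPointCount (ob n π) =
      (Finset.univ.filter fun m : Fin (n+1) => π (m + 1) = π m + 1).card := by
  have hrho : ∀ y : Fin (n+1), rho n y = y + 1 := fun y => finRotate_succ_apply y
  have hrhoinv : ∀ y : Fin (n+1), (rho n)⁻¹ (y + 1) = y := fun y => by
    rw [← hrho]; exact perm_inv_apply_self _ _
  have hob : ∀ x, ob n π x = rho n (π ((rho n)⁻¹ (π⁻¹ x))) := fun x => rfl
  unfold fixedPointCount
  symm
  apply Finset.card_bij (fun m _ => π (rho n m))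
  · intro m hm
    simp only [Finset.mem_filter, Finset.mem_univ, true_and] at hm ⊢
    rw [hrho, hob, perm_inv_apply_self, hrhoinv, hrho, ← hm]
  · intro a _ b _ h
    exact (rho n).injective (π.injective h)
  · intro x hx
    simp only [Finset.mem_filter, Finset.mem_univ, true_and] at hx ⊢
    rw [hob] at hx
    refine ⟨(rho n)⁻¹ (π⁻¹ x), ?_, ?_⟩
    · rw [← hrho (π ((rho n)⁻¹ (π⁻¹ x))), hx, ← hrho ((rho n)⁻¹ (π⁻¹ x)),
        perm_apply_inv_self, perm_apply_inv_self]
    · rw [perm_apply_inv_self, perm_apply_inv_self]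

lemma cond_iff (n : ℕ) (π : Equiv.Perm (Fin (n + 1))) (hπ : π 0 = 0) (m : Fin (n + 1)) :
    π (m + 1) = π m + 1 ↔ ptilde n π (↑m + 1) = ptilde n π ↑m + 1 := by
  have hm : ptilde n π ↑m = ((π m : Fin (n+1)) : ℕ) := by
    simp [ptilde, m.isLt]
  rcases eq_or_lt_of_le (Nat.lt_succ_iff.mp m.isLt) with h | h
  · -- m = last
    have hlast : m = Fin.last n := Fin.ext h
    have h1 : ptilde n π (↑m + 1) = n + 1 := by simp [ptilde, h]
    rw [h1, hm]
    subst hlast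
    rw [Fin.last_add_one, hπ]
    constructor
    · intro he
      have := congrArg Fin.val he.symm
      rw [Fin.val_add_one] at this
      split_ifs at this with hl
      · rw [hl]; simp [Fin.val_last]
      · simp at this
    · intro he
      have hl : π (Fin.last n) = Fin.last n := by
        apply Fin.ext; simp [Fin.val_last]; omega
      rw [hl, Fin.last_add_one]
  · -- m.val < n
    have hne : m ≠ Fin.last n := by
      intro he; rw [he, Fin.val_last] at h; omega
    have hval : ((m + 1 : Fin (n+1)) : ℕ) = ↑m + 1 := by
      rw [Fin.val_add_one]; simp [hne]
    have h1 : ptilde n π (↑m + 1) = ((π (m + 1) : Fin (n+1)) : ℕ) := by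
      have hlt : ↑m + 1 < n + 1 := by omega
      have : (⟨↑m + 1, hlt⟩ : Fin (n+1)) = m + 1 := by
        apply Fin.ext; simp [hval]
      simp [ptilde, hlt, this]
    rw [h1, hm]
    constructor
    · intro he
      rw [he, Fin.val_add_one]
      split_ifs with hl
      · exfalso
        rw [hl, Fin.last_add_one] at he
        have h0 : m + 1 = 0 := π.injective (by rw [he, hπ])
        have := congrArg Fin.val h0
        rw [hval] at this
        simp at this
      · rfl
    · intro he
      apply Fin.ext
      rw [he, Fin.val_add_one]
      split_ifs with hl
      · exfalso
        rw [hl, Fin.val_last] at he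
        have := (π (m+1)).isLt
        omega
      · rfl

lemma card_eq2 (n : ℕ) (π : Equiv.Perm (Fin (n + 1))) (hπ : π 0 = 0) :
    (Finset.univ.filter fun m : Fin (n+1) => π (m + 1) = π m + 1).card =
      ((Finset.range (n+1)).filter fun m => ptilde n π (m + 1) = ptilde n π m + 1).card := by
  refine Finset.card_bij (fun m _ => (m : ℕ)) ?_ ?_ ?_
  · intro m hm
    simp only [Finset.mem_filter, Finset.mem_univ, true_and, Finset.mem_range] at hm ⊢
    exact ⟨m.isLt, (cond_iff n π hπ m).mp hm⟩
  · intro a _ b _ h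
    exact Fin.ext h
  · intro b hb
    simp only [Finset.mem_filter, Finset.mem_univ, true_and, Finset.mem_range] at hb
    exact ⟨⟨b, hb.1⟩, by
      simp only [Finset.mem_filter, Finset.mem_univ, true_and]
      exact (cond_iff n π hπ ⟨b, hb.1⟩).mpr hb.2, rfl⟩

lemma q_zero (n : ℕ) (π : Equiv.Perm (Fin (n + 1))) (hπ : π 0 = 0) :
    (ptilde n π 1 = ptilde n π 0 + 1) ↔ π 1 = 1 := by
  have h0 : ptilde n π 0 = 0 := by
    have h : (⟨0, Nat.succ_pos n⟩ : Fin (n+1)) = 0 := rfl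
    simp [ptilde, h, hπ]
  rw [h0]
  rcases Nat.eq_zero_or_pos n with hn | hn
  · subst hn
    constructor
    · intro _
      have h1 := (π 1).isLt
      have h2 := (1 : Fin (0+1)).isLt
      apply Fin.ext; omega
    · intro _; simp [ptilde]
  · have hlt : 1 < n + 1 := by omega
    have h1 : (⟨1, hlt⟩ : Fin (n+1)) = 1 := by
      apply Fin.ext
      simp [Fin.val_one', Nat.mod_eq_of_lt hlt]
    have h2 : ptilde n π 1 = ((π 1 : Fin (n+1)) : ℕ) := by
      simp [ptilde, hlt, h1]
    rw [h2, Fin.ext_iff, Fin.val_one', Nat.mod_eq_of_lt hlt]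


/-- for every permutation π of {1,…,n} (extended to {0,…,n} by fixing 0),
ptb(π) = n + 1 − c₁(overline(π)) + ε, where ε = 1 if π_1 = 1 and ε = 0 otherwise. -/
theorem ptb_eq (n : ℕ) (π : Equiv.Perm (Fin (n + 1))) (hπ : π 0 = 0) :
    ptb n π = n + 1 - fixedPointCount (ob n π) + (if π 1 = 1 then 1 else 0) := by
  classical
  have hfix : fixedPointCount (ob n π) =
      ((Finset.range (n+1)).filter fun m => ptilde n π (m + 1) = ptilde n π m + 1).card := by
    rw [fix_eq]; exact card_eq2 n π hπ
  have hsplit : ptb n π + ((Finset.range (n+1)).filter fun m =>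
      ¬(m = 0 ∨ ptilde n π (m + 1) ≠ ptilde n π m + 1)).card = n + 1 := by
    rw [ptb, Finset.card_filter_add_card_filter_not, Finset.card_range]
  have h1 : ((Finset.range (n+1)).filter fun m =>
      ¬(m = 0 ∨ ptilde n π (m + 1) ≠ ptilde n π m + 1)) =
      ((Finset.range (n+1)).filter fun m =>
        (ptilde n π (m + 1) = ptilde n π m + 1) ∧ ¬(m = 0)) := by
    apply Finset.filter_congr
    intro m _
    tauto
  have h3 : ((Finset.range (n+1)).filter fun m =>
      (ptilde n π (m + 1) = ptilde n π m + 1) ∧ m = 0).card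
      = if π 1 = 1 then 1 else 0 := by
    by_cases h : π 1 = 1
    · rw [if_pos h, Finset.card_eq_one]
      refine ⟨0, ?_⟩
      ext m
      simp only [Finset.mem_filter, Finset.mem_range, Finset.mem_singleton]
      constructor
      · rintro ⟨_, _, h0⟩; exact h0
      · rintro rfl; exact ⟨Nat.succ_pos n, (q_zero n π hπ).mpr h, rfl⟩
    · rw [if_neg h, Finset.card_eq_zero]
      ext m
      simp only [Finset.mem_filter, Finset.mem_range, Finset.notMem_empty, iff_false, not_and]
      rintro _ hq rfl
      exact h ((q_zero n π hπ).mp hq)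
  have h4 := Finset.card_filter_add_card_filter_not
    (s := (Finset.range (n+1)).filter fun m => ptilde n π (m + 1) = ptilde n π m + 1)
    (p := fun m => m = 0)
  rw [Finset.filter_filter, Finset.filter_filter] at h4
  have hle : ((Finset.range (n+1)).filter fun m =>
      ptilde n π (m + 1) = ptilde n π m + 1).card ≤ n + 1 := by
    calc _ ≤ (Finset.range (n+1)).card := Finset.card_filter_le _ _
    _ = n + 1 := Finset.card_range _
  rw [h1] at hsplit
  rw [h3] at h4
  by_cases h : π 1 = 1
  · simp only [if_pos h] at h4 ⊢; omega
  · simp only [if_neg h] at h4 ⊢; omega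
end

section
/- Let π be an even permutation of {1,2,…,n}, and let d¹₃(π) be the least t such that π can be written as a product of t 3-cycles each of which moves the element 1. Then d¹₃(π) = (n + c(π))/2 − c₁(π) − ε, where c(π) is the number of cycles of π (counting fixed points), c₁(π) is the number of fixed points of π, and ε = 0 if π(1) = 1 and ε = 1 otherwise. -/
/-- The number of fixed points of σ among the elements {1,…,n}, i.e. c₁(σ) for σ viewed
as a permutation of {1,…,n} (σ is a permutation of {0,1,…,n} fixing 0). -/
def fixedPointCountPos (n : ℕ) (σ : Equiv.Perm (Fin (n + 1))) : ℕ :=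
  (Finset.univ.filter fun x : Fin (n + 1) => x ≠ 0 ∧ σ x = x).card

/-- The number of cycles of σ viewed as a permutation of {1,…,n}, counting fixed points
as 1-cycles (σ is a permutation of {0,1,…,n} fixing 0; its cycles of length ≥ 2,
recorded by `cycleType`, all live in {1,…,n}). -/
def cycleCountPos (n : ℕ) (σ : Equiv.Perm (Fin (n + 1))) : ℕ :=
  σ.cycleType.card + fixedPointCountPos n σ

/-- d¹₃(π): the least t such that π is a product of t 3-cycles, each of which moves the
element 1 (and each of which is a permutation of {1,…,n}, i.e. fixes 0). -/
noncomputable def d13 (n : ℕ) (π : Equiv.Perm (Fin (n + 1))) : ℕ :=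
  sInf {t | ∃ L : List (Equiv.Perm (Fin (n + 1))), L.length = t ∧
    (∀ g ∈ L, g.IsThreeCycle ∧ g 0 = 0 ∧ g 1 ≠ 1) ∧ L.prod = π}

set_option linter.unusedSectionVars false
set_option maxHeartbeats 1000000

namespace D13Aux

open Equiv Equiv.Perm Finset

variable {α : Type*} [Fintype α] [DecidableEq α]

def cls (σ : Perm α) (a : α) : Finset α := Finset.univ.filter (σ.SameCycle a)

lemma mem_cls {σ : Perm α} {a b : α} : b ∈ cls σ a ↔ σ.SameCycle a b := by simp [cls]

lemma self_mem_cls (σ : Perm α) (a : α) : a ∈ cls σ a := mem_cls.2 (Equiv.Perm.SameCycle.refl _ _)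

lemma cls_card_pos (σ : Perm α) (a : α) : 0 < (cls σ a).card :=
  Finset.card_pos.2 ⟨a, self_mem_cls σ a⟩

lemma cls_eq_of_sameCycle {σ : Perm α} {a b : α} (h : σ.SameCycle a b) :
    cls σ a = cls σ b := by
  ext c; simp only [mem_cls]
  exact ⟨fun h' => h.symm.trans h', fun h' => h.trans h'⟩

noncomputable def oc (σ : Perm α) : ℚ := ∑ a : α, ((cls σ a).card : ℚ)⁻¹

noncomputable def pot (p : α) (σ : Perm α) : ℚ :=
  2 * σ.support.card + oc σ - 2 * (if σ p = p then 0 else 1)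



lemma zpow_mem_of_closed {σ : Perm α} {s : Finset α} (hs : ∀ a ∈ s, σ a ∈ s) :
    ∀ (i : ℤ) (a : α), a ∈ s → (σ ^ i) a ∈ s := by
  have himg : s.image σ = s := by
    apply Finset.eq_of_subset_of_card_le
    · intro b hb; obtain ⟨a, ha, rfl⟩ := Finset.mem_image.1 hb; exact hs a ha
    · rw [Finset.card_image_of_injective _ σ.injective]
  have hinv : ∀ a ∈ s, σ⁻¹ a ∈ s := by
    intro a ha
    rw [← himg] at ha
    obtain ⟨b, hb, hba⟩ := Finset.mem_image.1 ha
    rwa [← hba, ← Equiv.Perm.mul_apply, inv_mul_cancel, Equiv.Perm.one_apply]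
  intro i
  induction i using Int.induction_on with
  | zero => simpa using fun a ha => ha
  | succ k ih =>
      intro a ha
      have h : σ ^ ((k : ℤ) + 1) = σ * σ ^ (k : ℤ) := by
        rw [← zpow_one_add]; rw [add_comm]
      rw [h]
      exact hs _ (ih a ha)
  | pred k ih =>
      intro a ha
      have h : σ ^ (-(k : ℤ) - 1) = σ⁻¹ * σ ^ (-(k : ℤ)) := by
        rw [← zpow_neg_one, ← zpow_add]; ring_nf
      rw [h]
      exact hinv _ (ih a ha)

lemma sameCycle_mul_swap_of_chain {σ : Perm α} {p x : α} :
    ∀ (k : ℕ) (a b : α), (σ ^ k) a = b → (∀ j < k, (σ ^ j) a ≠ p ∧ (σ ^ j) a ≠ x) →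
      (σ * Equiv.swap p x).SameCycle a b := by
  intro k
  induction k with
  | zero => intro a b h _; simp only [pow_zero, Equiv.Perm.coe_one, id_eq] at h; rw [h]
  | succ k ih =>
      intro a b h hav
      have h1 : (σ ^ k) a ≠ p ∧ (σ ^ k) a ≠ x := hav k (Nat.lt_succ_self k)
      rw [pow_succ'] at h
      have hstep : (σ * Equiv.swap p x) ((σ ^ k) a) = b := by
        rw [← h, Equiv.Perm.mul_apply, Equiv.Perm.mul_apply,
          Equiv.swap_apply_of_ne_of_ne h1.1 h1.2]
      have hpre : (σ * Equiv.swap p x).SameCycle a ((σ ^ k) a) :=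
        ih a _ rfl (fun j hj => hav j (Nat.lt_succ_of_lt hj))
      exact hpre.trans ⟨1, by simpa using hstep⟩

private lemma aux_chain {σ : Perm α} {p x : α} :
    ∀ (k : ℕ) (a : α),
      σ.SameCycle a (((σ * Equiv.swap p x) ^ k) a) ∨
        ((σ.SameCycle a p ∨ σ.SameCycle a x) ∧
          (σ.SameCycle (((σ * Equiv.swap p x) ^ k) a) p ∨
            σ.SameCycle (((σ * Equiv.swap p x) ^ k) a) x)) := by
  intro k
  induction k with
  | zero =>
      intro a; left
      simp only [pow_zero, Equiv.Perm.coe_one, id_eq]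
      exact Equiv.Perm.SameCycle.refl _ _
  | succ k ih =>
      intro a
      set c := ((σ * Equiv.swap p x) ^ k) a with hc
      have hsucc : ((σ * Equiv.swap p x) ^ (k+1)) a = (σ * Equiv.swap p x) c := by
        rw [pow_succ', Equiv.Perm.mul_apply]
      rw [hsucc]
      by_cases hcp : c = p
      · have hb : (σ * Equiv.swap p x) c = σ x := by
          rw [hcp, Equiv.Perm.mul_apply, Equiv.swap_apply_left]
        rw [hb]
        have hbx : σ.SameCycle (σ x) x := ((Equiv.Perm.sameCycle_apply_left).2 (Equiv.Perm.SameCycle.refl _ _))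
        rcases ih a with h | ⟨ha, _⟩
        · exact Or.inr ⟨Or.inl (by rw [← hc, hcp] at h; exact h), Or.inr hbx⟩
        · exact Or.inr ⟨ha, Or.inr hbx⟩
      · by_cases hcx : c = x
        · have hb : (σ * Equiv.swap p x) c = σ p := by
            rw [hcx, Equiv.Perm.mul_apply, Equiv.swap_apply_right]
          rw [hb]
          have hbp : σ.SameCycle (σ p) p := ((Equiv.Perm.sameCycle_apply_left).2 (Equiv.Perm.SameCycle.refl _ _))
          rcases ih a with h | ⟨ha, _⟩
          · exact Or.inr ⟨Or.inr (by rw [← hc, hcx] at h; exact h), Or.inl hbp⟩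
          · exact Or.inr ⟨ha, Or.inl hbp⟩
        · have hb : (σ * Equiv.swap p x) c = σ c := by
            rw [Equiv.Perm.mul_apply, Equiv.swap_apply_of_ne_of_ne hcp hcx]
          rw [hb]
          have hcb : σ.SameCycle c (σ c) := ⟨1, by simp⟩
          rcases ih a with h | ⟨ha, hc'⟩
          · exact Or.inl (h.trans hcb)
          · refine Or.inr ⟨ha, ?_⟩
            rcases hc' with h | h
            · exact Or.inl (hcb.symm.trans h)
            · exact Or.inr (hcb.symm.trans h)

lemma sameCycle_of_sameCycle_mul_swap_aux {σ : Perm α} {p x : α} (hpx : p ≠ x) :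
    ∀ (a b : α), (σ * Equiv.swap p x).SameCycle a b →
      σ.SameCycle a b ∨
        ((σ.SameCycle a p ∨ σ.SameCycle a x) ∧ (σ.SameCycle b p ∨ σ.SameCycle b x)) := by
  intro a b hab
  obtain ⟨k, _, _, hk⟩ := hab.exists_pow_eq _
  subst hk
  exact aux_chain k a


-- assume previous lemmas

section Merge
variable {σ : Perm α} {p x : α}

lemma sameCycle_mul_swap_apply_self (h : ¬ σ.SameCycle p x) :
    (σ * Equiv.swap p x).SameCycle (σ x) x := by
  by_cases hx : σ x = x
  · rw [hx]
  · have hxx : σ.SameCycle x x := Equiv.Perm.SameCycle.refl _ _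
    have hex : ∃ ℓ : ℕ, 0 < ℓ ∧ (σ ^ ℓ) x = x := by
      obtain ⟨i, hi0, _, hi⟩ := hxx.exists_pow_eq σ
      exact ⟨i, hi0, hi⟩
    classical
    obtain ⟨hℓ0, hℓ⟩ := Nat.find_spec hex
    set ℓ := Nat.find hex with hℓdef
    apply sameCycle_mul_swap_of_chain (ℓ - 1) (σ x) x
    · have : (σ ^ (ℓ - 1)) (σ x) = (σ ^ ℓ) x := by
        conv_rhs => rw [← Nat.succ_pred_eq_of_pos hℓ0]
        rw [pow_succ, Equiv.Perm.mul_apply]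
        rfl
      rw [this, hℓ]

    · intro j hj
      have hjx : (σ ^ j) (σ x) = (σ ^ (j+1)) x := by
        rw [pow_succ, Equiv.Perm.mul_apply]
      constructor
      · rw [hjx]
        intro hp
        exact h (Equiv.Perm.SameCycle.symm ⟨((j+1 : ℕ) : ℤ), by rw [zpow_natCast]; exact hp⟩)
      · rw [hjx]
        intro hxeq
        have hjℓ : j + 1 < ℓ := by omega
        exact Nat.find_min hex hjℓ ⟨Nat.succ_pos j, hxeq⟩

lemma merge_oneStep (h : ¬ σ.SameCycle p x) (hpx : p ≠ x) (a : α) :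
    (σ * Equiv.swap p x).SameCycle a (σ a) := by
  have hC : (σ * Equiv.swap p x).SameCycle (σ x) x := sameCycle_mul_swap_apply_self h
  have hC' : (σ * Equiv.swap p x).SameCycle (σ p) p := by
    have := sameCycle_mul_swap_apply_self (σ := σ) (p := x) (x := p)
      (fun hc => h hc.symm)
    rwa [Equiv.swap_comm p x]
  by_cases hap : a = p
  · rw [hap]
    have h1 : (σ * Equiv.swap p x).SameCycle p (σ x) :=
      ⟨1, by simp [Equiv.Perm.mul_apply]⟩
    have h2 : (σ * Equiv.swap p x).SameCycle x (σ p) :=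
      ⟨1, by simp [Equiv.Perm.mul_apply]⟩
    exact (h1.trans hC).trans h2
  · by_cases hax : a = x
    · rw [hax]
      have h1 : (σ * Equiv.swap p x).SameCycle x (σ p) :=
        ⟨1, by simp [Equiv.Perm.mul_apply]⟩
      have h2 : (σ * Equiv.swap p x).SameCycle p (σ x) :=
        ⟨1, by simp [Equiv.Perm.mul_apply]⟩
      exact (h1.trans hC').trans h2
    · exact ⟨1, by simp [Equiv.Perm.mul_apply, Equiv.swap_apply_of_ne_of_ne hap hax]⟩

lemma merge_lift (h : ¬ σ.SameCycle p x) (hpx : p ≠ x) {a b : α} (hab : σ.SameCycle a b) :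
    (σ * Equiv.swap p x).SameCycle a b := by
  have key : ∀ k : ℕ, (σ * Equiv.swap p x).SameCycle a ((σ ^ k) a) := by
    intro k
    induction k with
    | zero =>
        simp only [pow_zero, Equiv.Perm.coe_one, id_eq]
        exact Equiv.Perm.SameCycle.refl _ _
    | succ k ih =>
        have hs : (σ ^ (k+1)) a = σ ((σ ^ k) a) := by rw [pow_succ', Equiv.Perm.mul_apply]
        rw [hs]
        exact ih.trans (merge_oneStep h hpx _)
  obtain ⟨k, _, _, hk⟩ := hab.exists_pow_eq σ
  exact hk ▸ key k

lemma merge_px (h : ¬ σ.SameCycle p x) (hpx : p ≠ x) :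
    (σ * Equiv.swap p x).SameCycle p x :=
  Equiv.Perm.SameCycle.trans ⟨1, by simp [Equiv.Perm.mul_apply]⟩
    (sameCycle_mul_swap_apply_self h)

end Merge






section M
variable {σ : Perm α} {p x : α}

/-- In a class sum, the subsum over one class of inverse class cards is 1. -/
lemma sum_cls_inv (σ : Perm α) (c : α) :
    ∑ a ∈ cls σ c, ((cls σ a).card : ℚ)⁻¹ = 1 := by
  have h : ∀ a ∈ cls σ c, ((cls σ a).card : ℚ)⁻¹ = ((cls σ c).card : ℚ)⁻¹ := by
    intro a ha
    rw [cls_eq_of_sameCycle (mem_cls.1 ha).symm]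
  rw [Finset.sum_congr rfl h, Finset.sum_const, nsmul_eq_mul]
  rw [mul_inv_cancel₀]
  exact_mod_cast (cls_card_pos σ c).ne'

lemma oc_merge (h : ¬ σ.SameCycle p x) (hpx : p ≠ x) :
    oc (σ * Equiv.swap p x) = oc σ - 1 := by
  set σ' := σ * Equiv.swap p x with hσ'
  set S : Finset α := cls σ p ∪ cls σ x with hS
  have hdisj : Disjoint (cls σ p) (cls σ x) := by
    rw [Finset.disjoint_left]
    intro c hcp hcx
    exact h ((mem_cls.1 hcp).trans (mem_cls.1 hcx).symm)
  have hSmem : ∀ a, a ∈ S ↔ (σ.SameCycle p a ∨ σ.SameCycle x a) := by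
    intro a; simp [hS, Finset.mem_union, mem_cls]
  have hlink : ∀ a ∈ S, σ'.SameCycle p a := by
    intro a ha
    rcases (hSmem a).1 ha with h1 | h1
    · exact merge_lift h hpx h1
    · exact (merge_px h hpx).trans (merge_lift h hpx h1)
  have h2 : ∀ a ∈ S, cls σ' a = S := by
    intro a ha
    ext b
    simp only [mem_cls]
    constructor
    · intro hab
      rcases sameCycle_of_sameCycle_mul_swap_aux hpx a b hab with h1 | ⟨_, hb⟩
      · rcases (hSmem a).1 ha with h3 | h3
        · exact (hSmem b).2 (Or.inl (h3.trans h1))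
        · exact (hSmem b).2 (Or.inr (h3.trans h1))
      · rcases hb with h3 | h3
        · exact (hSmem b).2 (Or.inl h3.symm)
        · exact (hSmem b).2 (Or.inr h3.symm)
    · intro hb
      exact (hlink a ha).symm.trans (hlink b hb)
  have h1 : ∀ a ∉ S, cls σ' a = cls σ a := by
    intro a ha
    ext b
    simp only [mem_cls]
    constructor
    · intro hab
      rcases sameCycle_of_sameCycle_mul_swap_aux hpx a b hab with h1 | ⟨ha', _⟩
      · exact h1
      · exfalso
        apply ha
        rcases ha' with h3 | h3
        · exact (hSmem a).2 (Or.inl h3.symm)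
        · exact (hSmem a).2 (Or.inr h3.symm)
    · intro hab
      exact merge_lift h hpx hab
  -- now compute
  have hsplit : ∀ τ : Perm α, oc τ = (∑ a ∈ S, ((cls τ a).card : ℚ)⁻¹)
      + ∑ a ∈ Sᶜ, ((cls τ a).card : ℚ)⁻¹ := by
    intro τ
    rw [oc, ← Finset.sum_add_sum_compl S]
  have hSne : (S.card : ℚ) ≠ 0 := by
    have : p ∈ S := (hSmem p).2 (Or.inl (Equiv.Perm.SameCycle.refl _ _))
    exact_mod_cast (Finset.card_pos.2 ⟨p, this⟩).ne'
  have e1 : ∑ a ∈ S, ((cls σ' a).card : ℚ)⁻¹ = 1 := by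
    have : ∀ a ∈ S, ((cls σ' a).card : ℚ)⁻¹ = ((S.card : ℚ))⁻¹ := by
      intro a ha; rw [h2 a ha]
    rw [Finset.sum_congr rfl this, Finset.sum_const, nsmul_eq_mul, mul_inv_cancel₀ hSne]
  have e2 : ∑ a ∈ S, ((cls σ a).card : ℚ)⁻¹ = 2 := by
    rw [hS, Finset.sum_union hdisj, sum_cls_inv, sum_cls_inv]; norm_num
  have e3 : ∑ a ∈ Sᶜ, ((cls σ' a).card : ℚ)⁻¹ = ∑ a ∈ Sᶜ, ((cls σ a).card : ℚ)⁻¹ := by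
    apply Finset.sum_congr rfl
    intro a ha
    rw [h1 a (Finset.mem_compl.1 ha)]
  rw [hsplit σ', hsplit σ, e1, e2, e3]
  ring

lemma arc (h : σ.SameCycle p x) (hpx : p ≠ x) :
    ¬ (σ * Equiv.swap p x).SameCycle p x := by
  intro hcon
  -- least positive k with (σ ^ k) x = p
  have hex : ∃ k : ℕ, 0 < k ∧ (σ ^ k) x = p := by
    obtain ⟨i, hi0, _, hi⟩ := (h.symm).exists_pow_eq σ
    exact ⟨i, hi0, hi⟩
  classical
  obtain ⟨hk0, hkp⟩ := Nat.find_spec hex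
  set k := Nat.find hex with hkdef
  set A : Finset α := (Finset.range k).image (fun i => (σ ^ (i+1)) x) with hA
  have hpA : p ∈ A := by
    rw [hA, Finset.mem_image]
    exact ⟨k - 1, Finset.mem_range.2 (by omega), by rw [Nat.sub_add_cancel hk0]; exact hkp⟩
  have hxA : x ∉ A := by
    rw [hA]
    intro hx
    obtain ⟨i, hi, hix⟩ := Finset.mem_image.1 hx
    rw [Finset.mem_range] at hi
    have h1 : (σ ^ (k - (i+1))) x = p := by
      have : (σ ^ (k - (i+1))) ((σ ^ (i+1)) x) = (σ ^ k) x := by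
        rw [← Equiv.Perm.mul_apply, ← pow_add]
        congr 2
        omega
      rw [hix] at this
      rw [this, hkp]
    by_cases hik : i + 1 = k
    · rw [hik] at h1
      simp at h1
      exact hpx h1.symm
    · exact Nat.find_min hex (show k - (i+1) < k by omega) ⟨by omega, h1⟩
  have hclosed : ∀ a ∈ A, (σ * Equiv.swap p x) a ∈ A := by
    intro a ha
    obtain ⟨i, hi, hia⟩ := Finset.mem_image.1 (hA ▸ ha)
    rw [Finset.mem_range] at hi
    by_cases hap : a = p
    · have : (σ * Equiv.swap p x) a = (σ ^ (0+1)) x := by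
        rw [hap, Equiv.Perm.mul_apply, Equiv.swap_apply_left, pow_one]
      rw [this, hA]
      exact Finset.mem_image.2 ⟨0, Finset.mem_range.2 hk0, rfl⟩
    · have hax : a ≠ x := fun hax => hxA (hax ▸ ha)
      have hik : i + 1 < k := by
        rcases Nat.lt_or_ge (i+1) k with h' | h'
        · exact h'
        · exfalso
          apply hap
          have : i + 1 = k := by omega
          rw [← hia, this, hkp]
      have : (σ * Equiv.swap p x) a = (σ ^ (i+1+1)) x := by
        rw [Equiv.Perm.mul_apply, Equiv.swap_apply_of_ne_of_ne hap hax, ← hia,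
          ← Equiv.Perm.mul_apply, ← pow_succ']
      rw [this, hA]
      exact Finset.mem_image.2 ⟨i+1, Finset.mem_range.2 hik, rfl⟩
  obtain ⟨i, hi⟩ := hcon
  exact hxA (hi ▸ zpow_mem_of_closed hclosed i p hpA)

lemma oc_split (h : σ.SameCycle p x) (hpx : p ≠ x) :
    oc (σ * Equiv.swap p x) = oc σ + 1 := by
  have harc : ¬ (σ * Equiv.swap p x).SameCycle p x := arc h hpx
  have := oc_merge harc hpx
  rw [mul_assoc, Equiv.swap_mul_self, mul_one] at this
  linarith

end M



lemma oc_eq (σ : Perm α) :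
    oc σ = (Fintype.card α : ℚ) - σ.support.card + σ.cycleFactorsFinset.card := by
  have hfix : ∀ a ∉ σ.support, cls σ a = {a} := by
    intro a ha
    rw [Equiv.Perm.notMem_support] at ha
    ext b
    simp only [mem_cls, Finset.mem_singleton]
    constructor
    · rintro ⟨i, hi⟩
      rw [Equiv.Perm.zpow_apply_eq_self_of_apply_eq_self ha] at hi
      exact hi.symm
    · rintro rfl; exact Equiv.Perm.SameCycle.refl _ _
  have hmov : ∀ a ∈ σ.support, cls σ a = (σ.cycleOf a).support := by
    intro a ha
    ext b
    rw [mem_cls, Equiv.Perm.mem_support_cycleOf_iff]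
    exact ⟨fun h => ⟨h, ha⟩, fun h => h.1⟩
  rw [oc, ← Finset.sum_add_sum_compl σ.support]
  have e1 : ∑ a ∈ σ.supportᶜ, ((cls σ a).card : ℚ)⁻¹
      = (Fintype.card α : ℚ) - σ.support.card := by
    have : ∀ a ∈ σ.supportᶜ, ((cls σ a).card : ℚ)⁻¹ = 1 := by
      intro a ha
      rw [hfix a (Finset.mem_compl.1 ha), Finset.card_singleton]
      norm_num
    rw [Finset.sum_congr rfl this, Finset.sum_const, Finset.card_compl]
    have := Finset.card_le_univ σ.support
    rw [nsmul_eq_mul, mul_one, Nat.cast_sub this]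
  have e2 : ∑ a ∈ σ.support, ((cls σ a).card : ℚ)⁻¹ = σ.cycleFactorsFinset.card := by
    have hbi : σ.support = σ.cycleFactorsFinset.biUnion Equiv.Perm.support := by
      ext a
      simp only [Finset.mem_biUnion]
      constructor
      · intro ha
        refine ⟨σ.cycleOf a, Equiv.Perm.cycleOf_mem_cycleFactorsFinset_iff.2 ha, ?_⟩
        rw [Equiv.Perm.mem_support_cycleOf_iff]
        exact ⟨Equiv.Perm.SameCycle.refl _ _, ha⟩
      · rintro ⟨c, hc, hac⟩
        exact Equiv.Perm.mem_cycleFactorsFinset_support_le hc hac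
    rw [hbi, Finset.sum_biUnion]
    · have : ∀ c ∈ σ.cycleFactorsFinset,
          (∑ a ∈ c.support, ((cls σ a).card : ℚ)⁻¹) = 1 := by
        intro c hc
        have hcs : ∀ a ∈ c.support, cls σ a = c.support := by
          intro a ha
          have hca : c = σ.cycleOf a := Equiv.Perm.cycle_is_cycleOf ha hc
          have haσ : a ∈ σ.support := Equiv.Perm.mem_cycleFactorsFinset_support_le hc ha
          rw [hmov a haσ, ← hca]
        have hne : (c.support.card : ℚ) ≠ 0 := by
          have h1 : c ≠ 1 := (Equiv.Perm.mem_cycleFactorsFinset_iff.1 hc).1.ne_one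
          have h2 : c.support.Nonempty := Finset.nonempty_iff_ne_empty.2 (fun he => h1 (Equiv.Perm.support_eq_empty_iff.1 he))
          have := Finset.card_pos.2 h2
          exact_mod_cast this.ne'
        calc (∑ a ∈ c.support, ((cls σ a).card : ℚ)⁻¹)
            = ∑ a ∈ c.support, ((c.support.card : ℚ))⁻¹ :=
              Finset.sum_congr rfl (fun a ha => by rw [hcs a ha])
          _ = 1 := by rw [Finset.sum_const, nsmul_eq_mul, mul_inv_cancel₀ hne]
      rw [Finset.sum_congr rfl this, Finset.sum_const, nsmul_eq_mul, mul_one]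
    · intro u hu v hv huv
      have := σ.cycleFactorsFinset_pairwise_disjoint hu hv huv
      exact Equiv.Perm.Disjoint.disjoint_support this
  rw [e1, e2]
  ring



lemma pot_eq (p : α) (σ : Perm α) :
    pot p σ = (Fintype.card α : ℚ) + σ.support.card + σ.cycleFactorsFinset.card
      - 2 * (if σ p = p then 0 else 1) := by
  rw [pot, oc_eq]; ring

lemma mul_swap_apply_ne {σ : Perm α} {p x y : α} (hyp : y ≠ p) (hyx : y ≠ x) :
    (σ * Equiv.swap p x) y = σ y := by
  simp [Equiv.Perm.mul_apply, Equiv.swap_apply_of_ne_of_ne hyp hyx]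

lemma card_split {p x : α} (s : Finset α) (hpx : p ≠ x) :
    (s.card : ℚ) = ((s \ {p,x}).card : ℚ)
      + (if p ∈ s then 1 else 0) + (if x ∈ s then 1 else 0) := by
  have h1 : (s \ {p,x}).card + (s ∩ {p,x}).card = s.card := Finset.card_sdiff_add_card_inter s _
  have h2 : ((s ∩ {p,x}).card : ℚ) = (if p ∈ s then 1 else 0) + (if x ∈ s then 1 else 0) := by
    have : s ∩ {p,x} = ({p,x} : Finset α).filter (· ∈ s) := by
      ext a; simp [Finset.mem_inter, and_comm]
    rw [this]
    rw [show ({p,x} : Finset α) = insert p {x} from rfl, Finset.filter_insert,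
      Finset.filter_singleton]
    by_cases hp : p ∈ s <;> by_cases hx : x ∈ s <;>
        simp [hp, hx, Finset.card_insert_of_notMem, hpx] <;> norm_num
  have := congrArg (fun n : ℕ => (n : ℚ)) h1
  push_cast at this
  linarith [h2, this]

lemma support_sdiff_eq {σ : Perm α} {p x : α} :
    (σ * Equiv.swap p x).support \ {p,x} = σ.support \ {p,x} := by
  ext y
  simp only [Finset.mem_sdiff, Finset.mem_insert, Finset.mem_singleton,
    Equiv.Perm.mem_support]
  constructor
  · rintro ⟨h1, h2⟩
    push_neg at h2
    rw [mul_swap_apply_ne h2.1 h2.2] at h1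
    exact ⟨h1, by push_neg; exact h2⟩
  · rintro ⟨h1, h2⟩
    push_neg at h2
    rw [mul_swap_apply_ne h2.1 h2.2]
    exact ⟨h1, by push_neg; exact h2⟩

lemma support_card_diff {σ : Perm α} {p x : α} (hpx : p ≠ x) :
    ((σ * Equiv.swap p x).support.card : ℚ) - (if p ∈ (σ * Equiv.swap p x).support then (1:ℚ) else 0)
        - (if x ∈ (σ * Equiv.swap p x).support then (1:ℚ) else 0)
      = (σ.support.card : ℚ) - (if p ∈ σ.support then 1 else 0)
        - (if x ∈ σ.support then 1 else 0) := by
  rw [card_split (σ * Equiv.swap p x).support hpx, card_split σ.support hpx, support_sdiff_eq]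
  ring

lemma pot_diff {σ : Perm α} {p x : α} (hpx : x ≠ p) :
    pot p (σ * Equiv.swap p x) = pot p σ + (oc (σ * Equiv.swap p x) - oc σ)
      + 2 * ((if x ∈ (σ * Equiv.swap p x).support then (1:ℚ) else 0)
             - (if x ∈ σ.support then (1:ℚ) else 0)) := by
  have hsc := support_card_diff (σ := σ) (p := p) (x := x) (Ne.symm hpx)
  have hp1 : (if (σ * Equiv.swap p x) p = p then (0:ℚ) else 1)
      = (if p ∈ (σ * Equiv.swap p x).support then (1:ℚ) else 0) := by
    by_cases h : (σ * Equiv.swap p x) p = p <;> simp [h, Equiv.Perm.mem_support]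
  have hp2 : (if σ p = p then (0:ℚ) else 1)
      = (if p ∈ σ.support then (1:ℚ) else 0) := by
    by_cases h : σ p = p <;> simp [h, Equiv.Perm.mem_support]
  rw [pot, pot, hp1, hp2]
  linarith [hsc]

lemma pot_step_lower {σ : Perm α} {p x : α} (hpx : x ≠ p) :
    pot p σ - 1 ≤ pot p (σ * Equiv.swap p x) := by
  have hd := pot_diff (σ := σ) hpx
  by_cases hsc : σ.SameCycle p x
  · rw [oc_split hsc (Ne.symm hpx)] at hd
    have h1 : (0:ℚ) ≤ (if x ∈ (σ * Equiv.swap p x).support then (1:ℚ) else 0) := by positivity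
    have h2 : (if x ∈ σ.support then (1:ℚ) else 0) ≤ 1 := by split <;> norm_num
    linarith
  · rw [oc_merge hsc (Ne.symm hpx)] at hd
    have hxs : (if x ∈ σ.support then (1:ℚ) else 0)
        ≤ (if x ∈ (σ * Equiv.swap p x).support then (1:ℚ) else 0) := by
      by_cases hx : x ∈ σ.support
      · have : x ∈ (σ * Equiv.swap p x).support := by
          rw [Equiv.Perm.mem_support, Equiv.Perm.mul_apply, Equiv.swap_apply_right]
          intro hcon
          exact hsc ⟨1, by simpa using hcon⟩
        simp [hx, this]
      · simp only [hx, if_false]; positivity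
    linarith


lemma three_cycle_decomp {g : Perm α} (hg : g.IsThreeCycle) {o : α} (h1 : g o ≠ o) :
    ∃ a b : α, a ≠ o ∧ b ≠ o ∧ a ≠ b ∧ g o = a ∧ g a = b ∧ g b = o ∧
      g = Equiv.swap o b * Equiv.swap o a := by
  obtain ⟨a, ha⟩ : ∃ a, g o = a := ⟨_, rfl⟩
  obtain ⟨b, hb⟩ : ∃ b, g a = b := ⟨_, rfl⟩
  have hao : a ≠ o := ha ▸ h1
  have hab : a ≠ b := by
    intro h
    have h2 : g o = g a := by rw [ha, hb, h]
    exact hao (g.injective h2).symm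
  have hgb : g b = o := by
    have h3 : g ^ 3 = 1 := by rw [← hg.orderOf]; exact pow_orderOf_eq_one g
    have e : (g ^ 3) o = g (g (g o)) := by
      simp [pow_succ, Equiv.Perm.mul_apply]
    rw [← hb, ← ha, ← e, h3, Equiv.Perm.one_apply]
  have hbo : b ≠ o := by
    intro h
    have h2 : g b = a := by rw [h, ha]
    rw [hgb] at h2
    exact hao h2.symm
  have hos : o ∈ g.support := Equiv.Perm.mem_support.2 h1
  have has : a ∈ g.support := Equiv.Perm.mem_support.2 (by rw [hb]; exact Ne.symm hab)
  have hbs : b ∈ g.support := Equiv.Perm.mem_support.2 (by rw [hgb]; exact Ne.symm hbo)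
  have hsub : ({o, a, b} : Finset α) ⊆ g.support := by
    intro y hy
    simp only [Finset.mem_insert, Finset.mem_singleton] at hy
    rcases hy with rfl | rfl | rfl
    · exact hos
    · exact has
    · exact hbs
  have hcard : ({o, a, b} : Finset α).card = 3 := by
    rw [Finset.card_insert_of_notMem, Finset.card_insert_of_notMem] <;>
      simp [Ne.symm hao, Ne.symm hbo, hab, hbo, hao]
  have hsupp_eq : g.support = {o, a, b} :=
    (Finset.eq_of_subset_of_card_le hsub (by rw [hcard, hg.card_support])).symm
  refine ⟨a, b, hao, hbo, hab, ha, hb, hgb, ?_⟩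
  ext y
  rw [Equiv.Perm.mul_apply]
  by_cases hyo : y = o
  · subst hyo
    rw [Equiv.swap_apply_left, Equiv.swap_apply_of_ne_of_ne hao hab, ha]
  · by_cases hya : y = a
    · subst hya
      rw [Equiv.swap_apply_right, Equiv.swap_apply_left, hb]
    · by_cases hyb : y = b
      · subst hyb
        rw [Equiv.swap_apply_of_ne_of_ne hbo (Ne.symm hab), Equiv.swap_apply_right, hgb]
      · have hy : y ∉ g.support := by
          rw [hsupp_eq]
          simp [hyo, hya, hyb]
        rw [Equiv.Perm.notMem_support.1 hy,
          Equiv.swap_apply_of_ne_of_ne hyo hya, Equiv.swap_apply_of_ne_of_ne hyo hyb]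



lemma mul_swap_self_fixed (σ : Perm α) (p x : α) : (σ * Equiv.swap p x) x = σ p := by
  simp [Equiv.Perm.mul_apply]

lemma move1 {σ : Perm α} {p : α} (hp : σ p ≠ p) (hpp : σ (σ p) ≠ p) :
    pot p ((σ * Equiv.swap p (σ p)) * Equiv.swap p (σ (σ p))) = pot p σ - 2 := by
  set b := σ p with hbdef
  set a := σ b with hadef
  have hbp : b ≠ p := hp
  have hsb : σ b ≠ b := fun h => hbp (σ.injective (h.trans hbdef))
  -- step 1
  set τ := σ * Equiv.swap p b with hτ
  have hd1 := pot_diff (σ := σ) (p := p) (x := b) hbp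
  have hsc1 : σ.SameCycle p b := ⟨1, by simp [hbdef]⟩
  have hoc1 : oc τ = oc σ + 1 := oc_split hsc1 (Ne.symm hbp)
  have hbin : b ∈ σ.support := Equiv.Perm.mem_support.2 hsb
  have hbout : b ∉ τ.support := by
    rw [Equiv.Perm.mem_support, hτ, mul_swap_self_fixed]
    simp [hbdef]
  have hpot1 : pot p τ = pot p σ - 1 := by
    rw [hτ] at hbout ⊢
    rw [hd1, hoc1, if_neg hbout, if_pos hbin]
    ring
  -- step 2
  have hap : a ≠ p := hpp
  have hab : a ≠ b := fun h => hsb (hadef ▸ h)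
  have hτp : τ p = a := by
    rw [hτ, Equiv.Perm.mul_apply, Equiv.swap_apply_left, hadef]
  have hτa : τ a = σ a := by
    rw [hτ, Equiv.Perm.mul_apply, Equiv.swap_apply_of_ne_of_ne hap hab]
  have hsa : σ a ≠ a := fun h => hab (σ.injective (h.trans hadef))
  have hd2 := pot_diff (σ := τ) (p := p) (x := a) hap
  have hsc2 : τ.SameCycle p a := ⟨1, by simp [hτp]⟩
  have hoc2 : oc (τ * Equiv.swap p a) = oc τ + 1 := oc_split hsc2 (Ne.symm hap)
  have hain : a ∈ τ.support := Equiv.Perm.mem_support.2 (by rw [hτa]; exact hsa)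
  have haout : a ∉ (τ * Equiv.swap p a).support := by
    rw [Equiv.Perm.mem_support, mul_swap_self_fixed, hτp]
    simp
  have hpot2 : pot p (τ * Equiv.swap p a) = pot p τ - 1 := by
    rw [hd2, hoc2, if_neg haout, if_pos hain]
    ring
  rw [← hτ] at *
  rw [hpot2, hpot1]
  ring

lemma move2 {σ : Perm α} {p c : α} (hpc : ¬ σ.SameCycle p c) (hc : σ c ≠ c) :
    pot p ((σ * Equiv.swap p c) * Equiv.swap p (σ c)) = pot p σ - 2 := by
  have hcp : c ≠ p := fun h => hpc (h ▸ Equiv.Perm.SameCycle.refl σ p)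
  set d := σ c with hddef
  have hdp : d ≠ p := by
    intro h
    exact hpc ⟨-1, by rw [zpow_neg_one, ← h, hddef, ← Equiv.Perm.mul_apply, inv_mul_cancel, Equiv.Perm.one_apply]⟩
  have hdc : d ≠ c := hddef ▸ hc
  -- step 1
  set τ := σ * Equiv.swap p c with hτ
  have hd1 := pot_diff (σ := σ) (p := p) (x := c) hcp
  have hoc1 : oc τ = oc σ - 1 := oc_merge hpc (Ne.symm hcp)
  have hcin : c ∈ σ.support := Equiv.Perm.mem_support.2 hc
  have hcin' : c ∈ τ.support := by
    rw [Equiv.Perm.mem_support, hτ, mul_swap_self_fixed]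
    intro h
    exact hpc ⟨1, by simpa using h⟩
  have hpot1 : pot p τ = pot p σ - 1 := by
    rw [hτ] at hcin' ⊢
    rw [hd1, hoc1, if_pos hcin', if_pos hcin]
    ring
  -- step 2
  have hτp : τ p = d := by
    rw [hτ, Equiv.Perm.mul_apply, Equiv.swap_apply_left, hddef]
  have hτd : τ d = σ d := by
    rw [hτ, Equiv.Perm.mul_apply, Equiv.swap_apply_of_ne_of_ne hdp hdc]
  have hsd : σ d ≠ d := fun h => hdc (σ.injective (h.trans hddef))
  have hd2 := pot_diff (σ := τ) (p := p) (x := d) hdp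
  have hsc2 : τ.SameCycle p d := ⟨1, by simp [hτp]⟩
  have hoc2 : oc (τ * Equiv.swap p d) = oc τ + 1 := oc_split hsc2 (Ne.symm hdp)
  have hdin : d ∈ τ.support := Equiv.Perm.mem_support.2 (by rw [hτd]; exact hsd)
  have hdout : d ∉ (τ * Equiv.swap p d).support := by
    rw [Equiv.Perm.mem_support, mul_swap_self_fixed, hτp]
    simp
  have hpot2 : pot p (τ * Equiv.swap p d) = pot p τ - 1 := by
    rw [hd2, hoc2, if_neg hdout, if_pos hdin]
    ring
  rw [← hτ] at *
  rw [hpot2, hpot1]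
  ring


lemma pot_one (p : α) : pot p (1 : Perm α) = (Fintype.card α : ℚ) := by
  rw [pot_eq]
  simp

/-- Existence of a short enough product: upper bound. -/
lemma upper {z o : α} (hzo : z ≠ o) :
    ∀ (m : ℕ) (σ : Perm α),
      σ.support.card + σ.cycleFactorsFinset.card + 2 * (if σ o = o then 1 else 0) ≤ m →
      σ z = z → Equiv.Perm.sign σ = 1 →
      ∃ L : List (Perm α), (∀ g ∈ L, g.IsThreeCycle ∧ g z = z ∧ g o ≠ o) ∧
        L.prod = σ ∧ (2 * L.length : ℚ) = pot o σ - Fintype.card α := by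
  intro m
  induction m with
  | zero =>
      intro σ hm hz hsign
      by_cases hσ : σ = 1
      · subst hσ
        simp at hm
      · have := Equiv.Perm.one_lt_card_support_of_ne_one hσ
        omega
  | succ m ih =>
      intro σ hm hz hsign
      by_cases hσ : σ = 1
      · subst hσ
        refine ⟨[], by simp, by simp, ?_⟩
        rw [pot_one]
        simp
      · -- find a 3-cycle move
        have hmain : ∃ g : Perm α, g.IsThreeCycle ∧ g z = z ∧ g o ≠ o ∧
            pot o (σ * g) = pot o σ - 2 := by
          by_cases hp : σ o ≠ o ∧ σ (σ o) ≠ o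
          · obtain ⟨hp1, hp2⟩ := hp
            set b := σ o with hbdef
            set a := σ b with hadef
            have hbo : b ≠ o := hp1
            have hao : a ≠ o := hp2
            have hab : a ≠ b := by
              intro h
              exact hbo (σ.injective ((hadef.symm.trans h).trans hbdef))
            have hbz : b ≠ z := by
              intro h
              exact (Ne.symm hzo) (σ.injective (by rw [← hbdef, h, hz]))
            have haz : a ≠ z := by
              intro h
              exact hbz (σ.injective (by rw [← hadef, h, hz]))
            refine ⟨Equiv.swap o b * Equiv.swap o a,
              Equiv.Perm.isThreeCycle_swap_mul_swap_same (Ne.symm hbo) (Ne.symm hao) (Ne.symm hab), ?_, ?_, ?_⟩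
            · rw [Equiv.Perm.mul_apply, Equiv.swap_apply_of_ne_of_ne hzo (Ne.symm haz),
                Equiv.swap_apply_of_ne_of_ne hzo (Ne.symm hbz)]
            · rw [Equiv.Perm.mul_apply, Equiv.swap_apply_left,
                Equiv.swap_apply_of_ne_of_ne hao hab]
              exact hao
            · rw [← mul_assoc]
              exact move1 hp1 hp2
          · push_neg at hp
            have hfix2 : σ (σ o) = o := by
              by_cases h : σ o = o
              · rw [h, h]
              · exact hp h
            have hex : ∃ c ∈ σ.support, c ≠ o ∧ c ≠ σ o := by
              by_cases h : σ o = o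
              · have hne : σ.support.Nonempty :=
                  Finset.nonempty_iff_ne_empty.2
                    (fun he => hσ (Equiv.Perm.support_eq_empty_iff.1 he))
                obtain ⟨c, hc⟩ := hne
                have hco : c ≠ o := by
                  intro hh
                  rw [hh] at hc
                  exact (Equiv.Perm.mem_support.1 hc) h
                exact ⟨c, hc, hco, by rw [h]; exact hco⟩
              · by_contra hcon
                push_neg at hcon
                have hsub : σ.support ⊆ {o, σ o} := by
                  intro y hy
                  by_cases hyo : y = o
                  · simp [hyo]
                  · simp [hcon y hy hyo]
                have hsub2 : ({o, σ o} : Finset α) ⊆ σ.support := by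
                  intro y hy
                  simp only [Finset.mem_insert, Finset.mem_singleton] at hy
                  rcases hy with rfl | rfl
                  · exact Equiv.Perm.mem_support.2 h
                  · exact Equiv.Perm.mem_support.2 (by rw [hfix2]; exact Ne.symm h)
                have heq : σ.support = {o, σ o} := Finset.Subset.antisymm hsub hsub2
                have hcard : σ.support.card = 2 := by
                  rw [heq, Finset.card_insert_of_notMem (by simpa using Ne.symm h),
                    Finset.card_singleton]
                obtain ⟨u, v, huv, rfl⟩ := Equiv.Perm.card_support_eq_two.1 hcard
                rw [Equiv.Perm.sign_swap huv] at hsign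
                exact absurd hsign (by norm_num)
            obtain ⟨c, hcs, hco, hcso⟩ := hex
            have hc : σ c ≠ c := Equiv.Perm.mem_support.1 hcs
            have hpc : ¬ σ.SameCycle o c := by
              rintro ⟨i, hi⟩
              have hclosed : ∀ y ∈ ({o, σ o} : Finset α), σ y ∈ ({o, σ o} : Finset α) := by
                intro y hy
                simp only [Finset.mem_insert, Finset.mem_singleton] at hy ⊢
                rcases hy with rfl | rfl
                · right; rfl
                · left; exact hfix2
              have := zpow_mem_of_closed hclosed i o (by simp)
              rw [hi] at this
              simp only [Finset.mem_insert, Finset.mem_singleton] at this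
              rcases this with h' | h'
              · exact hco h'
              · exact hcso h'
            have hdo : σ c ≠ o := by
              intro h
              exact hcso (σ.injective (h.trans hfix2.symm))
            have hdc : σ c ≠ c := hc
            have hcz : c ≠ z := by
              intro h
              rw [h] at hc
              exact hc hz
            have hdz : σ c ≠ z := by
              intro h
              have : c = z := σ.injective (by rw [h, hz])
              exact hcz this
            refine ⟨Equiv.swap o c * Equiv.swap o (σ c),
              Equiv.Perm.isThreeCycle_swap_mul_swap_same (Ne.symm hco) (Ne.symm hdo)
                (Ne.symm hdc), ?_, ?_, ?_⟩
            · rw [Equiv.Perm.mul_apply, Equiv.swap_apply_of_ne_of_ne hzo (Ne.symm hdz),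
                Equiv.swap_apply_of_ne_of_ne hzo (Ne.symm hcz)]
            · rw [Equiv.Perm.mul_apply, Equiv.swap_apply_left,
                Equiv.swap_apply_of_ne_of_ne hdo hdc]
              exact hdo
            · rw [← mul_assoc]
              exact move2 hpc hc
        obtain ⟨g, hg3, hgz, hgo, hgpot⟩ := hmain
        set σ₂ := σ * g with hσ₂
        have hσ₂z : σ₂ z = z := by rw [hσ₂, Equiv.Perm.mul_apply, hgz, hz]
        have hσ₂sign : Equiv.Perm.sign σ₂ = 1 := by
          rw [hσ₂, Equiv.Perm.sign_mul, hsign, hg3.sign, mul_one]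
        have hmucast : ∀ τ : Perm α, ((τ.support.card + τ.cycleFactorsFinset.card
            + 2 * (if τ o = o then 1 else 0) : ℕ) : ℚ) = pot o τ - Fintype.card α + 2 := by
          intro τ
          rw [pot_eq]
          by_cases h : τ o = o <;> simp [h] <;> push_cast <;> ring
        have hμ₂ : σ₂.support.card + σ₂.cycleFactorsFinset.card
            + 2 * (if σ₂ o = o then 1 else 0) ≤ m := by
          have h1 := hmucast σ₂
          have h2 := hmucast σ
          rw [hgpot] at h1
          have : ((σ₂.support.card + σ₂.cycleFactorsFinset.card
              + 2 * (if σ₂ o = o then 1 else 0) : ℕ) : ℚ) + 2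
              = ((σ.support.card + σ.cycleFactorsFinset.card
              + 2 * (if σ o = o then 1 else 0) : ℕ) : ℚ) := by
            rw [h1, h2]; ring
          have hnat : (σ₂.support.card + σ₂.cycleFactorsFinset.card
              + 2 * (if σ₂ o = o then 1 else 0)) + 2
              = σ.support.card + σ.cycleFactorsFinset.card
              + 2 * (if σ o = o then 1 else 0) := by exact_mod_cast this
          omega
        obtain ⟨L₂, hL₂mem, hL₂prod, hL₂len⟩ := ih σ₂ hμ₂ hσ₂z hσ₂sign
        refine ⟨L₂ ++ [g⁻¹], ?_, ?_, ?_⟩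
        · intro g' hg'
          rcases List.mem_append.1 hg' with h | h
          · exact hL₂mem g' h
          · rw [List.mem_singleton.1 h]
            refine ⟨hg3.inv, ?_, ?_⟩
            · apply g.injective
              rw [← Equiv.Perm.mul_apply, mul_inv_cancel, Equiv.Perm.one_apply, hgz]
            · intro hcon
              apply hgo
              conv_lhs => rw [← hcon]
              rw [← Equiv.Perm.mul_apply, mul_inv_cancel, Equiv.Perm.one_apply]
        · rw [List.prod_append, List.prod_singleton, hL₂prod, hσ₂,
            mul_assoc, mul_inv_cancel, mul_one]
        · rw [List.length_append, List.length_singleton]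
          push_cast
          push_cast at hL₂len
          rw [hgpot] at hL₂len
          linarith

/-- Lower bound. -/
lemma lower {o : α} :
    ∀ L : List (Perm α), (∀ g ∈ L, g.IsThreeCycle ∧ g o ≠ o) →
      pot o L.prod ≤ Fintype.card α + 2 * L.length := by
  intro L
  induction L using List.reverseRecOn with
  | nil =>
      intro _
      rw [List.prod_nil, pot_one]
      simp
  | append_singleton L g ih =>
      intro hmem
      have hL := ih (fun g' h => hmem g' (List.mem_append.2 (Or.inl h)))
      obtain ⟨hg3, hgo⟩ := hmem g (List.mem_append.2 (Or.inr (List.mem_singleton_self g)))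
      obtain ⟨a, b, hao, hbo, hab, _, _, _, hg_eq⟩ := three_cycle_decomp hg3 hgo
      rw [List.prod_append, List.prod_singleton]
      set π := L.prod * g with hπ
      have hback : ((π * Equiv.swap o a) * Equiv.swap o b) = L.prod := by
        simp [hπ, hg_eq, mul_assoc, Equiv.swap_mul_self_mul, Equiv.swap_mul_self]
      have h1 : pot o π - 1 ≤ pot o (π * Equiv.swap o a) := pot_step_lower hao
      have h2 : pot o (π * Equiv.swap o a) - 1 ≤ pot o ((π * Equiv.swap o a) * Equiv.swap o b) :=
        pot_step_lower hbo
      rw [hback] at h2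
      rw [List.length_append, List.length_singleton]
      push_cast
      push_cast at hL
      linarith

end D13Aux

open D13Aux in
/-- for every even permutation π of {1,…,n} (extended to {0,…,n} by
fixing 0), d¹₃(π) = (n + c(π))/2 − c₁(π) − ε, where c and c₁ count cycles and fixed
points of π as a permutation of {1,…,n}, and ε = 0 if π(1) = 1 and ε = 1 otherwise. -/
theorem d13_eq (n : ℕ) (π : Equiv.Perm (Fin (n + 1))) (hπ : π 0 = 0)
    (heven : Equiv.Perm.sign π = 1) :
    (d13 n π : ℚ) = ((n : ℚ) + cycleCountPos n π) / 2 - fixedPointCountPos n π -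
      (if π 1 = 1 then 0 else 1) := by
  classical
  by_cases hn : n = 0
  · subst hn
    have hπ1 : π = 1 := Equiv.ext fun x => by
      fin_cases x
      simpa using hπ
    have hd : d13 0 π = 0 := by
      apply Nat.eq_zero_of_le_zero
      apply Nat.sInf_le
      exact ⟨[], rfl, by simp, by simp [hπ1]⟩
    have hfpc : fixedPointCountPos 0 π = 0 := by
      rw [fixedPointCountPos, Finset.card_eq_zero, Finset.filter_eq_empty_iff]
      intro x _
      simp [Fin.eq_zero x]
    have hct : cycleCountPos 0 π = 0 := by
      rw [cycleCountPos, hfpc, hπ1]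
      simp [Equiv.Perm.cycleType_one]
    have hone : π 1 = 1 := by rw [hπ1]; rfl
    rw [hd, hfpc, hct, if_pos hone]
    norm_num
  · have hzo : (0 : Fin (n + 1)) ≠ 1 := by
      have h1 : (1 : ℕ) % (n+1) = 1 := Nat.mod_eq_of_lt (by omega)
      simp [Fin.ext_iff, Fin.val_one', h1]
    obtain ⟨L, hLmem, hLprod, hLlen⟩ := upper (α := Fin (n+1)) (z := 0) (o := 1) hzo
      (π.support.card + π.cycleFactorsFinset.card + 2 * (if π 1 = 1 then 1 else 0)) π le_rfl hπ heven
    set S := {t | ∃ L : List (Equiv.Perm (Fin (n + 1))), L.length = t ∧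
      (∀ g ∈ L, g.IsThreeCycle ∧ g 0 = 0 ∧ g 1 ≠ 1) ∧ L.prod = π} with hS
    have hmemS : L.length ∈ S := ⟨L, rfl, fun g hg => (hLmem g hg), hLprod⟩
    have hub : d13 n π ≤ L.length := Nat.sInf_le hmemS
    have hlb : L.length ≤ d13 n π := by
      have hSne : S.Nonempty := ⟨L.length, hmemS⟩
      obtain ⟨L', hL'len, hL'mem, hL'prod⟩ := Nat.sInf_mem hSne
      have hlow := lower (α := Fin (n+1)) (o := 1) L'
        (fun g hg => ⟨(hL'mem g hg).1, (hL'mem g hg).2.2⟩)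
      rw [hL'prod, hL'len] at hlow
      have h2 : (2 : ℚ) * L.length ≤ 2 * (d13 n π) := by
        rw [hLlen]
        have : (Fintype.card (Fin (n+1)) : ℚ) + 2 * (sInf S) = Fintype.card (Fin (n+1)) + 2 * (d13 n π) := by
          rfl
        linarith [hlow, this.symm.le]
      have : (L.length : ℚ) ≤ (d13 n π : ℚ) := by linarith
      exact_mod_cast this
    have hdlen : d13 n π = L.length := le_antisymm hub hlb
    -- final algebra
    have hcard : (Fintype.card (Fin (n+1)) : ℚ) = n + 1 := by
      rw [Fintype.card_fin]; push_cast; ring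
    have hdq : (2 : ℚ) * (d13 n π) = pot 1 π - Fintype.card (Fin (n+1)) := by
      rw [hdlen, hLlen]
    rw [pot_eq] at hdq
    have hctq : (cycleCountPos n π : ℚ) = π.cycleFactorsFinset.card + fixedPointCountPos n π := by
      rw [cycleCountPos]
      push_cast
      congr 1
      rw [Equiv.Perm.cycleType_def, Multiset.card_map]
      rfl
    have hfpcq : (fixedPointCountPos n π : ℚ) + 1 + π.support.card = n + 1 := by
      have e1 : (Finset.univ.filter fun x : Fin (n+1) => x ≠ 0 ∧ π x = x)
          = π.supportᶜ.erase 0 := by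
        ext x
        simp only [Finset.mem_filter, Finset.mem_univ, true_and, Finset.mem_erase,
          Finset.mem_compl, Equiv.Perm.mem_support, not_not]
      have h0 : (0 : Fin (n+1)) ∈ π.supportᶜ := by
        simp [Equiv.Perm.mem_support, hπ]
      have e2 : (π.supportᶜ.erase 0).card + 1 = π.supportᶜ.card :=
        Finset.card_erase_add_one h0
      have e3 : π.supportᶜ.card + π.support.card = n + 1 := by
        rw [Finset.card_compl]
        have := Finset.card_le_univ π.support
        simp only [Fintype.card_fin] at this ⊢
        omega
      have : fixedPointCountPos n π + 1 + π.support.card = n + 1 := by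
        rw [fixedPointCountPos, e1]
        omega
      exact_mod_cast this
    rw [hctq]
    rw [hcard] at hdq
    linarith [hdq, hfpcq]
end

section
/- For every permutation π of {1,2,…,n}, the lower bound (n + 1 + c(overline(π)))/2 − c₁(overline(π)) − ε (where ε = 0 if π_1 = 1 and ε = 1 otherwise) is at least ⌈(ptb(π) − 1)/2⌉; that is, the cycle-based lower bound on the prefix transposition distance always exceeds or equals the breakpoint-based lower bound of Dias and Meidanis. -/
private lemma sum_c1 {n : ℕ} (σ : Equiv.Perm (Fin (n+1))) :
    σ.cycleType.sum + fixedPointCount σ = n + 1 := by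
  classical
  rw [Equiv.Perm.sum_cycleType, fixedPointCount]
  have h : σ.support = Finset.univ.filter (fun x => σ x ≠ x) := rfl
  have h2 := Finset.card_filter_add_card_filter_not
    (s := (Finset.univ : Finset (Fin (n+1)))) (p := fun x => σ x ≠ x)
  simp only [not_not] at h2
  rw [h]
  simpa [Finset.card_univ] using h2

private lemma core (n : ℕ) (π : Equiv.Perm (Fin (n + 1))) (hπ : π 0 = 0)
    (m : ℕ) (hm0 : m ≠ 0) (hm : m < n + 1) :
    (ptilde n π (m + 1) = ptilde n π m + 1) ↔
      rho n (π ⟨m, hm⟩) = π (rho n ⟨m, hm⟩) := by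
  rcases eq_or_lt_of_le (Nat.lt_succ_iff.mp hm) with hmn | hmn
  · subst hmn
    have hlast : rho m ⟨m, hm⟩ = 0 := by
      rw [rho, finRotate_succ_apply]; exact Fin.last_add_one m
    simp only [ptilde]
    rw [dif_neg (by omega : ¬ (m + 1 < m + 1)), dif_pos hm]
    rw [hlast, hπ, rho, finRotate_succ_apply]
    constructor
    · intro h
      have hl : π ⟨m, hm⟩ = Fin.last m := Fin.ext (by rw [Fin.val_last]; omega)
      rw [hl, Fin.last_add_one]
    · intro h
      rw [← Fin.last_add_one m] at h
      have hl : π ⟨m, hm⟩ = Fin.last m := add_right_cancel h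
      rw [hl, Fin.val_last]
  · have hm1 : m + 1 < n + 1 := by omega
    have hne : (⟨m, hm⟩ : Fin (n+1)) ≠ Fin.last n := by
      intro hc
      have := congrArg Fin.val hc
      simp only [Fin.val_last] at this
      omega
    have hstep : rho n ⟨m, hm⟩ = ⟨m + 1, hm1⟩ := by
      rw [rho, finRotate_succ_apply]
      apply Fin.ext
      rw [Fin.val_add_one, if_neg hne]
    simp only [ptilde]
    rw [dif_pos hm1, dif_pos hm, hstep, rho, finRotate_succ_apply]
    constructor
    · intro h
      have hne2 : π ⟨m, hm⟩ ≠ Fin.last n := by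
        intro hc
        rw [hc, Fin.val_last] at h
        have := (π ⟨m+1, hm1⟩).isLt
        omega
      apply Fin.ext
      rw [Fin.val_add_one, if_neg hne2]
      omega
    · intro h
      have hne2 : π ⟨m, hm⟩ ≠ Fin.last n := by
        intro hc
        rw [hc, Fin.last_add_one] at h
        have h0 : (⟨m+1, hm1⟩ : Fin (n+1)) = 0 := π.injective (by rw [hπ, ← h])
        simp only [Fin.ext_iff, Fin.val_zero] at h0
        omega
      have hv := congrArg Fin.val h
      rw [Fin.val_add_one, if_neg hne2] at hv
      omega

private lemma rho_zero (n : ℕ) : rho n 0 = 1 := by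
  rw [rho, finRotate_succ_apply, zero_add]

private lemma rho_inv_one (n : ℕ) : (rho n)⁻¹ 1 = 0 := by
  rw [← rho_zero n, Equiv.Perm.inv_eq_iff_eq.mpr rfl]

private lemma sign_ob (n : ℕ) (π : Equiv.Perm (Fin (n+1))) :
    Equiv.Perm.sign (ob n π) = 1 := by
  rw [ob]
  simp only [map_mul, map_inv]
  generalize Equiv.Perm.sign (rho n) = a
  generalize Equiv.Perm.sign π = b
  rw [mul_comm b a⁻¹, mul_assoc a⁻¹ b b⁻¹, mul_inv_cancel, mul_one, mul_inv_cancel]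

private lemma key_count (n : ℕ) (π : Equiv.Perm (Fin (n + 1))) (hπ : π 0 = 0) :
    ptb n π + fixedPointCount (ob n π) = n + 1 + (if π 1 = 1 then 1 else 0) := by
  classical
  set B : Finset (Fin (n + 1)) :=
    Finset.univ.filter (fun i => rho n (π ((rho n)⁻¹ i)) = π i) with hBdef
  have hmemB : ∀ i, i ∈ B ↔ rho n (π ((rho n)⁻¹ i)) = π i := by
    intro i; simp [hBdef]
  have hfix : fixedPointCount (ob n π) = B.card := by
    unfold fixedPointCount
    apply Finset.card_bij' (fun x _ => π⁻¹ x) (fun i _ => π i)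
    · intro x hx
      rw [hmemB]
      simp only [Finset.mem_filter, Finset.mem_univ, true_and] at hx
      simpa [ob, Equiv.Perm.mul_apply] using hx
    · intro i hi
      rw [hmemB] at hi
      simp only [Finset.mem_filter, Finset.mem_univ, true_and]
      simpa [ob, Equiv.Perm.mul_apply] using hi
    · intro x hx; simp
    · intro i hi; simp
  set NB : Finset ℕ := (Finset.range (n + 1)).filter
      (fun m => ¬ (m = 0 ∨ ptilde n π (m + 1) ≠ ptilde n π m + 1)) with hNBdef
  have hptb : ptb n π + NB.card = n + 1 := by
    have h := Finset.card_filter_add_card_filter_not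
      (s := Finset.range (n+1))
      (p := fun m => m = 0 ∨ ptilde n π (m + 1) ≠ ptilde n π m + 1)
    simpa [ptb, hNBdef] using h
  have hmemNB : ∀ m, m ∈ NB ↔
      m < n + 1 ∧ m ≠ 0 ∧ ptilde n π (m + 1) = ptilde n π m + 1 := by
    intro m
    simp [hNBdef, not_or, and_assoc]
  have hone : (1 : Fin (n+1)) ∈ B ↔ π 1 = 1 := by
    rw [hmemB, rho_inv_one, hπ, rho_zero, eq_comm]
  have herase : (B.erase 1).card = NB.card := by
    have hi : ∀ i (hi : i ∈ B.erase 1), (((rho n)⁻¹ i : Fin (n+1)) : ℕ) ∈ NB := by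
      intro i hi
      obtain ⟨hne, hiB⟩ := Finset.mem_erase.mp hi
      rw [hmemB] at hiB
      have hj0 : (((rho n)⁻¹ i : Fin (n+1)) : ℕ) ≠ 0 := by
        intro h0
        apply hne
        have hz : ((rho n)⁻¹ i : Fin (n+1)) = 0 := Fin.ext h0
        have := congrArg (rho n) hz
        rw [Equiv.Perm.eq_inv_iff_eq.mp rfl, rho_zero] at this
        exact this
      rw [hmemNB]
      refine ⟨Fin.isLt _, hj0, ?_⟩
      rw [core n π hπ _ hj0 (Fin.isLt _)]
      simpa [Fin.eta, Equiv.apply_symm_apply] using hiB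
    have hj : ∀ m (hm : m ∈ NB), rho n ⟨m, ((hmemNB m).mp hm).1⟩ ∈ B.erase 1 := by
      intro m hm
      obtain ⟨hmlt, hm0, hmeq⟩ := (hmemNB m).mp hm
      rw [Finset.mem_erase]
      constructor
      · intro hc
        have hz : (⟨m, hmlt⟩ : Fin (n+1)) = 0 := by
          apply (rho n).injective; rw [rho_zero]; exact hc
        exact hm0 (by simpa [Fin.ext_iff] using hz)
      · rw [hmemB, Equiv.Perm.inv_eq_iff_eq.mpr rfl]
        exact (core n π hπ m hm0 hmlt).mp hmeq
    exact Finset.card_bij' _ _ hi hj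
      (fun i hi => by simp [Fin.eta, Equiv.apply_symm_apply])
      (fun m hm => by simp [Equiv.symm_apply_apply])
  have hcard : B.card = NB.card + (if π 1 = 1 then 1 else 0) := by
    by_cases h1 : π 1 = 1
    · rw [if_pos h1, ← herase, Finset.card_erase_of_mem (hone.mpr h1)]
      have hpos : 1 ≤ B.card := Finset.card_pos.mpr ⟨1, hone.mpr h1⟩
      omega
    · rw [if_neg h1, ← herase,
        Finset.erase_eq_of_notMem (fun h => h1 (hone.mp h)), add_zero]
  rw [hfix, hcard, ← add_assoc, hptb]

/-- for every permutation π of {1,…,n} (extended to {0,…,n} by fixing 0),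
the cycle-based lower bound (n + 1 + c(overline(π)))/2 − c₁(overline(π)) − ε
(with ε = 0 if π_1 = 1 and ε = 1 otherwise) is at least the breakpoint-based lower
bound ⌈(ptb(π) − 1)/2⌉ of Dias and Meidanis. -/
theorem cycle_bound_ge_breakpoint_bound (n : ℕ) (π : Equiv.Perm (Fin (n + 1)))
    (hπ : π 0 = 0) :
    (⌈((ptb n π : ℚ) - 1) / 2⌉ : ℚ) ≤
      ((n : ℚ) + 1 + cycleCount (ob n π)) / 2 - fixedPointCount (ob n π) -
        (if π 1 = 1 then 0 else 1) := by
  classical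
  have hsum : (ob n π).cycleType.sum + fixedPointCount (ob n π) = n + 1 :=
    sum_c1 (ob n π)
  have hkey := key_count n π hπ
  have heven : Even ((ob n π).cycleType.sum + Multiset.card (ob n π).cycleType) := by
    have hsign := sign_ob n π
    rw [Equiv.Perm.sign_of_cycleType] at hsign
    rcases Nat.even_or_odd _ with h | h
    · exact h
    · rw [Odd.neg_one_pow h] at hsign
      exact absurd hsign (by decide)
  obtain ⟨t, ht⟩ := heven
  set s := (ob n π).cycleType.sum with hsdef
  set k := Multiset.card (ob n π).cycleType with hkdef
  set c1 := fixedPointCount (ob n π) with hc1def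
  have hcc : cycleCount (ob n π) = k + c1 := rfl
  rw [hcc]
  have hsq : (s : ℚ) + c1 = (n : ℚ) + 1 := by exact_mod_cast hsum
  have htq : (s : ℚ) + k = (t : ℚ) + t := by exact_mod_cast ht
  by_cases h1 : π 1 = 1
  · rw [if_pos h1]
    rw [if_pos h1] at hkey
    have hp : ptb n π = s + 1 := by omega
    have hR : ((n : ℚ) + 1 + ↑(k + c1)) / 2 - ↑c1 - 0 = ((t : ℤ) : ℚ) := by
      push_cast
      linarith
    rw [hR]
    have hle : ((ptb n π : ℚ) - 1) / 2 ≤ ((t : ℤ) : ℚ) := by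
      rw [hp]
      push_cast
      have hk0 : (0 : ℚ) ≤ k := by positivity
      rw [div_le_iff₀ (by norm_num : (0:ℚ) < 2)]
      push_cast
      linarith
    exact_mod_cast Int.ceil_le.mpr hle
  · rw [if_neg h1]
    rw [if_neg h1] at hkey
    have hp : ptb n π = s := by omega
    have hk1 : 1 ≤ k := by
      rw [hkdef]
      have hne : (ob n π).cycleType ≠ 0 := by
        rw [Ne, Equiv.Perm.cycleType_eq_zero]
        intro hid
        apply h1
        have h2 : ob n π (π 1) = π 1 := by rw [hid]; rfl
        have h3 : ob n π (π 1) = 1 := by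
          simp [ob, Equiv.Perm.mul_apply, hπ, rho_inv_one, rho_zero]
        rw [h3] at h2
        exact h2.symm
      exact Multiset.card_pos.mpr hne
    have hR : ((n : ℚ) + 1 + ↑(k + c1)) / 2 - ↑c1 - 1 = (((t : ℤ) - 1 : ℤ) : ℚ) := by
      push_cast
      linarith
    rw [hR]
    have hle : ((ptb n π : ℚ) - 1) / 2 ≤ (((t : ℤ) - 1 : ℤ) : ℚ) := by
      rw [hp]
      push_cast
      have hk1q : (1 : ℚ) ≤ k := by exact_mod_cast hk1
      rw [div_le_iff₀ (by norm_num : (0:ℚ) < 2)]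
      linarith
    exact_mod_cast Int.ceil_le.mpr hle
end

section
/- Let χ be the reverse permutation of {1,2,…,n}, mapping i to n+1−i, extended to {0,1,…,n} by fixing 0. For every permutation π of {1,2,…,n} (extended to {0,1,…,n} by fixing 0), the image of the conjugate π^χ = χ∘π∘χ satisfies overline(π^χ) = ρ ∘ (χ ∘ (overline(π))⁻¹ ∘ χ) ∘ ρ⁻¹, where ρ is the (n+1)-cycle (0,1,2,…,n). -/
/-- let χ be the reverse permutation of {1,…,n}, mapping i to n+1−i and
fixing 0. For every permutation π of {1,…,n} (extended to {0,…,n} by fixing 0),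
overline(χ∘π∘χ) = ρ ∘ (χ ∘ (overline(π))⁻¹ ∘ χ) ∘ ρ⁻¹, where ρ = (0,1,2,…,n). -/
theorem overline_conj_reverse (n : ℕ) (π χ : Equiv.Perm (Fin (n + 1)))
    (hπ : π 0 = 0) (hχ0 : χ 0 = 0)
    (hχ : ∀ x : Fin (n + 1), x ≠ 0 → (χ x : ℕ) = n + 1 - (x : ℕ)) :
    ob n (χ * π * χ) = rho n * (χ * (ob n π)⁻¹ * χ) * (rho n)⁻¹ := by
  -- value of rho
  have hr : ∀ x : Fin (n + 1), ((rho n) x : ℕ) = if (x : ℕ) = n then 0 else (x : ℕ) + 1 := by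
    intro x
    rw [rho, finRotate_succ_apply, Fin.val_add_one]
    simp [Fin.ext_iff, Fin.last]
  -- value of χ
  have hχ' : ∀ x : Fin (n + 1), ((χ x : ℕ)) = if (x : ℕ) = 0 then 0 else n + 1 - (x : ℕ) := by
    intro x
    by_cases hx : x = 0
    · simp [hx, hχ0]
    · rw [hχ x hx, if_neg (show ¬ (x : ℕ) = 0 from fun h => hx (Fin.ext (by simp [h])))]
  -- χ is an involution
  have hχχ : χ * χ = 1 := by
    ext x
    have hx := x.isLt
    simp only [Equiv.Perm.mul_apply, Equiv.Perm.one_apply, Fin.ext_iff, hχ']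
    split_ifs <;> first | omega | exact absurd trivial ‹¬_› | exact (‹False›).elim
  have hχinv : χ⁻¹ = χ := inv_eq_of_mul_eq_one_right hχχ
  -- key relation: ρ χ ρ χ = 1
  have hmul : rho n * χ * rho n * χ = 1 := by
    ext x
    have hx := x.isLt
    simp only [Equiv.Perm.mul_apply, Equiv.Perm.one_apply, Fin.ext_iff, hr, hχ', hχ0, Fin.val_zero]
    split_ifs <;> first | omega | exact absurd trivial ‹¬_› | exact (‹False›).elim
  have hcr : χ * rho n * χ = (rho n)⁻¹ := by
    refine eq_inv_of_mul_eq_one_right ?_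
    rw [← mul_assoc, ← mul_assoc]; exact hmul
  -- χ ρ⁻¹ χ = ρ
  have c1 : χ * (rho n)⁻¹ * χ = rho n := by
    have := congrArg Inv.inv hcr
    simpa [mul_inv_rev, hχinv, mul_assoc] using this
  -- ρ⁻¹ χ ρ⁻¹ = χ
  have hcomm : (rho n)⁻¹ * χ = χ * rho n := by
    rw [← hcr]
    simp [mul_assoc, hχχ]
  have B : (rho n)⁻¹ * (χ * (rho n)⁻¹) = χ := by
    rw [← mul_assoc, hcomm, mul_assoc, mul_inv_cancel, mul_one]
  have A : ∀ z : Equiv.Perm (Fin (n + 1)),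
      χ * ((rho n)⁻¹ * (χ * z)) = rho n * z := by
    intro z
    calc χ * ((rho n)⁻¹ * (χ * z)) = (χ * (rho n)⁻¹ * χ) * z := by
          simp [mul_assoc]
      _ = rho n * z := by rw [c1]
  simp only [ob, mul_inv_rev, hχinv, inv_inv, mul_assoc]
  rw [A (π⁻¹ * χ), B]
end
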